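/- arXiv:2412.00779 — 2 statements merged into one kernel-verified Lean document; each statement's English description precedes it below -/
import Mathlib

section
/- Let $\gamma\in(0,1)$, $T\in(-\infty,\infty]$, $p\in(1,\infty)$, $\omega\in A_p(\mathbb{R})$ with $[\omega]_{A_p}\leq K_0$, and let $E\subset F\subset(-\infty,T)$ be measurable with $|E|<\infty$. Suppose for every $t\leq T$ and $R>0$: if $|\mathcal{C}_R(t)\cap E| \geq \gamma|\mathcal{C}_R(t)|$ then $\mathcal{C}_R(t)\cap\{s\leq T\}\subset F$. Then $\omega(E) \leq N\gamma^\delta\,\omega(F)$, where $N>0$ and $\delta\in(0,1)$ depend only on $K_0$. -/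
open MeasureTheory Set

namespace InkSpots

/-- A positive measurable weight satisfying the Hruščëv-type `A∞` inequality
with constant `K` on every bounded interval. -/
structure GW (ω : ℝ → ℝ) (K : ℝ) : Prop where
  meas : Measurable ω
  pos : ∀ x, 0 < ω x
  int : ∀ a b : ℝ, IntegrableOn ω (Set.Ico a b)
  intlog : ∀ a b : ℝ, IntegrableOn (fun x => Real.log (ω x)) (Set.Ico a b)
  oneleK : 1 ≤ K
  hru : ∀ a b : ℝ, a < b →
    (b - a)⁻¹ * ∫ s in Set.Ico a b, ω s ≤
      K * Real.exp ((b - a)⁻¹ * ∫ s in Set.Ico a b, Real.log (ω s))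

variable {ω : ℝ → ℝ} {K : ℝ}

theorem GW.intOn (h : GW ω K) {a b : ℝ} {G : Set ℝ} (hG : G ⊆ Set.Ico a b) :
    IntegrableOn ω G :=
  (h.int a b).mono_set hG

theorem GW.setInt_nonneg (h : GW ω K) (G : Set ℝ) : 0 ≤ ∫ x in G, ω x :=
  setIntegral_nonneg_of_ae (Filter.Eventually.of_forall fun x => (h.pos x).le)

theorem GW.integral_pos (h : GW ω K) {a b : ℝ} (hab : a < b) :
    0 < ∫ x in Set.Ico a b, ω x := by
  rw [setIntegral_pos_iff_support_of_nonneg_ae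
    (Filter.Eventually.of_forall fun x => (h.pos x).le) (h.int a b)]
  have : Function.support ω ∩ Set.Ico a b = Set.Ico a b := by
    apply Set.inter_eq_self_of_subset_right
    intro x _; exact ne_of_gt (h.pos x)
  rw [this, Real.volume_Ico]
  simpa using sub_pos.2 hab

theorem GW.avg_pos (h : GW ω K) {a b : ℝ} (hab : a < b) :
    0 < (b - a)⁻¹ * ∫ s in Set.Ico a b, ω s :=
  mul_pos (inv_pos.2 (sub_pos.2 hab)) (h.integral_pos hab)

theorem GW.badset_meas (h : GW ω K) (a b c : ℝ) :
    MeasurableSet {x | x ∈ Set.Ico a b ∧ ω x < c} := by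
  have : {x | x ∈ Set.Ico a b ∧ ω x < c} = Set.Ico a b ∩ ω ⁻¹' (Set.Iio c) := rfl
  rw [this]
  exact measurableSet_Ico.inter (h.meas measurableSet_Iio)

/-- The "bad set" estimate: the set where `ω` is exponentially smaller than its
average over `Ico a b` is small. -/
theorem GW.badset (h : GW ω K) {a b lam : ℝ} (hab : a < b) (hlam : 0 < lam) :
    (volume {x | x ∈ Set.Ico a b ∧
        ω x < Real.exp (-lam) * ((b - a)⁻¹ * ∫ s in Set.Ico a b, ω s)}).toReal ≤
      (Real.log K + 1) / lam * (b - a) := by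
  have hL : 0 < b - a := sub_pos.2 hab
  set c : ℝ := (b - a)⁻¹ * ∫ s in Set.Ico a b, ω s with hc
  have hcpos : 0 < c := h.avg_pos hab
  set g : ℝ → ℝ := fun x => max (Real.log (c / ω x)) 0 with hgdef
  have hgm : Measurable g :=
    (Real.measurable_log.comp (measurable_const.div h.meas)).max measurable_const
  have hgnn : ∀ x, 0 ≤ g x := fun x => le_max_right _ _
  set B : ℝ → ℝ := fun x => Real.log c - Real.log (ω x) + ω x / c with hBdef
  have hgle : ∀ x, g x ≤ B x := by
    intro x
    have hωx := h.pos x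
    have hlog : Real.log (ω x / c) ≤ ω x / c :=
      le_trans (Real.log_le_sub_one_of_pos (div_pos hωx hcpos)) (by linarith [div_pos hωx hcpos])
    have hlogdiv : Real.log (c / ω x) = Real.log c - Real.log (ω x) :=
      Real.log_div (ne_of_gt hcpos) (ne_of_gt hωx)
    have hlogdiv' : Real.log (ω x / c) = Real.log (ω x) - Real.log c :=
      Real.log_div (ne_of_gt hωx) (ne_of_gt hcpos)
    rcases le_total (Real.log (c / ω x)) 0 with h' | h'
    · rw [hgdef]; simp only [max_eq_right h']
      rw [hBdef]; dsimp only
      rw [hlogdiv] at h'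
      rw [hlogdiv'] at hlog
      linarith
    · rw [hgdef]; simp only [max_eq_left h']
      rw [hBdef]; dsimp only
      rw [hlogdiv]
      have : 0 ≤ ω x / c := (div_pos hωx hcpos).le
      linarith
  have hBint : IntegrableOn B (Set.Ico a b) := by
    apply Integrable.add
    · exact (integrable_const _).sub (h.intlog a b)
    · exact (h.int a b).div_const c
  have hgint : IntegrableOn g (Set.Ico a b) := by
    apply Integrable.mono' hBint (hgm.aestronglyMeasurable)
    exact Filter.Eventually.of_forall fun x => by
      rw [Real.norm_eq_abs, abs_of_nonneg (hgnn x)]; exact hgle x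
  -- integral of B
  have hintB : ∫ x in Set.Ico a b, B x ≤ (b - a) * (Real.log K + 1) := by
    have e1 : ∫ x in Set.Ico a b, B x
        = (∫ x in Set.Ico a b, (Real.log c - Real.log (ω x)))
          + ∫ x in Set.Ico a b, ω x / c := by
      rw [hBdef]
      exact integral_add ((integrable_const _).sub (h.intlog a b)) ((h.int a b).div_const c)
    have e2 : ∫ x in Set.Ico a b, (Real.log c - Real.log (ω x))
        = (b - a) * Real.log c - ∫ x in Set.Ico a b, Real.log (ω x) := by
      rw [integral_sub (integrable_const _) (h.intlog a b), setIntegral_const]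
      simp [Real.volume_Ico, ENNReal.toReal_ofReal hL.le, smul_eq_mul, hab.le]
    have e3 : ∫ x in Set.Ico a b, ω x / c = (∫ x in Set.Ico a b, ω x) / c :=
      integral_div c _
    have h2 : (∫ x in Set.Ico a b, ω x) / c = b - a := by
      rw [hc]
      have hne : (∫ x in Set.Ico a b, ω x) ≠ 0 := ne_of_gt (h.integral_pos hab)
      field_simp
    have h3 : (b - a) * Real.log c ≤ (b - a) * Real.log K + ∫ x in Set.Ico a b, Real.log (ω x) := by
      have hK : (0:ℝ) < K := lt_of_lt_of_le zero_lt_one h.oneleK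
      have hhru := h.hru a b hab
      rw [← hc] at hhru
      have hlog := Real.log_le_log hcpos hhru
      rw [Real.log_mul (ne_of_gt hK) (Real.exp_ne_zero _), Real.log_exp] at hlog
      have hmul := mul_le_mul_of_nonneg_left hlog hL.le
      rw [mul_add] at hmul
      calc (b - a) * Real.log c ≤ (b - a) * Real.log K
            + (b - a) * ((b - a)⁻¹ * ∫ s in Set.Ico a b, Real.log (ω s)) := hmul
        _ = (b - a) * Real.log K + ∫ s in Set.Ico a b, Real.log (ω s) := by
            rw [← mul_assoc, mul_inv_cancel₀ (ne_of_gt hL), one_mul]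
    rw [e1, e2, e3, h2]
    linarith
  -- Chebyshev
  have cheb := mul_meas_ge_le_integral_of_nonneg (μ := volume.restrict (Set.Ico a b))
    (f := g) (Filter.Eventually.of_forall hgnn) hgint lam
  have hsub : {x | x ∈ Set.Ico a b ∧ ω x < Real.exp (-lam) * c}
      ⊆ {x | lam ≤ g x} ∩ Set.Ico a b := by
    rintro x ⟨hx1, hx2⟩
    refine ⟨?_, hx1⟩
    have hωx := h.pos x
    have h1 : Real.exp lam ≤ c / ω x := by
      rw [le_div_iff₀ hωx]
      have : Real.exp lam * ω x < Real.exp lam * (Real.exp (-lam) * c) :=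
        mul_lt_mul_of_pos_left hx2 (Real.exp_pos lam)
      rw [← mul_assoc, ← Real.exp_add] at this
      simpa using this.le
    have h2 : lam ≤ Real.log (c / ω x) := by
      calc lam = Real.log (Real.exp lam) := (Real.log_exp lam).symm
        _ ≤ Real.log (c / ω x) := Real.log_le_log (Real.exp_pos _) h1
    exact le_trans h2 (le_max_left _ _)
  have hgmeas : MeasurableSet {x | lam ≤ g x} := hgm measurableSet_Ici
  have hmeasle : volume {x | x ∈ Set.Ico a b ∧ ω x < Real.exp (-lam) * c}
      ≤ (volume.restrict (Set.Ico a b)) {x | lam ≤ g x} := by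
    rw [Measure.restrict_apply hgmeas]
    exact measure_mono hsub
  have hfin : (volume.restrict (Set.Ico a b)) {x | lam ≤ g x} ≠ ⊤ := by
    rw [Measure.restrict_apply hgmeas]
    exact ne_of_lt (lt_of_le_of_lt (measure_mono inter_subset_right) measure_Ico_lt_top)
  have hintg : ∫ x in Set.Ico a b, g x ≤ ∫ x in Set.Ico a b, B x :=
    integral_mono hgint hBint hgle
  have key : lam * (volume {x | x ∈ Set.Ico a b ∧ ω x < Real.exp (-lam) * c}).toReal
      ≤ (b - a) * (Real.log K + 1) := by
    calc lam * (volume {x | x ∈ Set.Ico a b ∧ ω x < Real.exp (-lam) * c}).toReal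
        ≤ lam * ((volume.restrict (Set.Ico a b)) {x | lam ≤ g x}).toReal := by
          exact mul_le_mul_of_nonneg_left (ENNReal.toReal_mono hfin hmeasle) hlam.le
      _ ≤ ∫ x in Set.Ico a b, g x := cheb
      _ ≤ (b - a) * (Real.log K + 1) := le_trans hintg hintB
  rw [div_mul_eq_mul_div, le_div_iff₀ hlam]
  calc (volume {x | x ∈ Set.Ico a b ∧ ω x < Real.exp (-lam) * c}).toReal * lam
      = lam * (volume {x | x ∈ Set.Ico a b ∧ ω x < Real.exp (-lam) * c}).toReal := mul_comm _ _
    _ ≤ (b - a) * (Real.log K + 1) := key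
    _ = (Real.log K + 1) * (b - a) := mul_comm _ _

/-- Lower bound for the integral of `ω` over a subset `G` of `Ico a b`. -/
theorem GW.lower (h : GW ω K) {a b lam : ℝ} (hab : a < b) (hlam : 0 < lam)
    {G : Set ℝ} (hGm : MeasurableSet G) (hG : G ⊆ Set.Ico a b) :
    Real.exp (-lam) * ((b - a)⁻¹ * ∫ s in Set.Ico a b, ω s) *
        ((volume G).toReal - (Real.log K + 1) / lam * (b - a)) ≤ ∫ x in G, ω x := by
  have hL : 0 < b - a := sub_pos.2 hab
  set c : ℝ := (b - a)⁻¹ * ∫ s in Set.Ico a b, ω s with hc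
  have hcpos : 0 < c := h.avg_pos hab
  set Bad : Set ℝ := {x | x ∈ Set.Ico a b ∧ ω x < Real.exp (-lam) * c} with hBad
  have hBadm : MeasurableSet Bad := h.badset_meas a b _
  have hBadvol : (volume Bad).toReal ≤ (Real.log K + 1) / lam * (b - a) := h.badset hab hlam
  set G' : Set ℝ := G \ Bad with hG'
  have hG'm : MeasurableSet G' := hGm.diff hBadm
  have hG'fin : volume G' ≠ ⊤ :=
    ne_of_lt (lt_of_le_of_lt (measure_mono (fun x hx => hG hx.1)) measure_Ico_lt_top)
  have hGfin : volume G ≠ ⊤ :=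
    ne_of_lt (lt_of_le_of_lt (measure_mono hG) measure_Ico_lt_top)
  have hBadfin : volume Bad ≠ ⊤ :=
    ne_of_lt (lt_of_le_of_lt (measure_mono (fun x hx => hx.1)) measure_Ico_lt_top)
  -- measure arithmetic
  have hvol : (volume G).toReal - (Real.log K + 1) / lam * (b - a) ≤ (volume G').toReal := by
    have hsplit : volume G ≤ volume G' + volume Bad := by
      refine le_trans (measure_mono ?_) (measure_union_le _ _)
      intro x hx
      by_cases hxB : x ∈ Bad
      · exact Or.inr hxB
      · exact Or.inl ⟨hx, hxB⟩
    have := ENNReal.toReal_mono (by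
      exact ENNReal.add_ne_top.2 ⟨hG'fin, hBadfin⟩) hsplit
    rw [ENNReal.toReal_add hG'fin hBadfin] at this
    linarith
  -- lower bound on G'
  have hlow : Real.exp (-lam) * c * (volume G').toReal ≤ ∫ x in G', ω x := by
    have := setIntegral_ge_of_const_le (μ := volume) (c := Real.exp (-lam) * c) hG'm hG'fin
      (fun x hx => by
        have hx1 : x ∈ Set.Ico a b := hG hx.1
        have hx2 : x ∉ Bad := hx.2
        by_contra hcon
        push_neg at hcon
        exact hx2 ⟨hx1, hcon⟩) (h.intOn (fun x hx => hG hx.1))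
    rw [smul_eq_mul, measureReal_def] at this
    linarith [this]
  have hmono : ∫ x in G', ω x ≤ ∫ x in G, ω x :=
    setIntegral_mono_set (h.intOn hG)
      (Filter.Eventually.of_forall fun x => (h.pos x).le)
      (Filter.Eventually.of_forall fun x hx => hx.1)
  calc Real.exp (-lam) * c * ((volume G).toReal - (Real.log K + 1) / lam * (b - a))
      ≤ Real.exp (-lam) * c * (volume G').toReal :=
        mul_le_mul_of_nonneg_left hvol (mul_nonneg (Real.exp_pos _).le hcpos.le)
    _ ≤ ∫ x in G', ω x := hlow
    _ ≤ ∫ x in G, ω x := hmono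

/-- The `(1/4, β)` condition. -/
theorem GW.alphaBeta (h : GW ω K) {a b : ℝ} (hab : a < b)
    {S : Set ℝ} (hSm : MeasurableSet S) (hS : S ⊆ Set.Ico a b)
    (hvol : (volume S).toReal ≤ (b - a) / 4) :
    ∫ x in S, ω x ≤ (1 - Real.exp (-(4 * (Real.log K + 1))) / 2) * ∫ x in Set.Ico a b, ω x := by
  have hL : 0 < b - a := sub_pos.2 hab
  have hA : 0 < Real.log K + 1 := by
    have : (0:ℝ) ≤ Real.log K := Real.log_nonneg h.oneleK
    linarith
  set lam : ℝ := 4 * (Real.log K + 1) with hlam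
  have hlampos : 0 < lam := by positivity
  set G : Set ℝ := Set.Ico a b \ S with hGdef
  have hGm : MeasurableSet G := measurableSet_Ico.diff hSm
  have hGvol : (b - a) - (volume S).toReal ≤ (volume G).toReal := by
    have : volume (Set.Ico a b) ≤ volume G + volume S := by
      refine le_trans (measure_mono ?_) (measure_union_le _ _)
      intro x hx
      by_cases hxS : x ∈ S
      · exact Or.inr hxS
      · exact Or.inl ⟨hx, hxS⟩
    have hfin1 : volume G ≠ ⊤ :=
      ne_of_lt (lt_of_le_of_lt (measure_mono diff_subset) measure_Ico_lt_top)
    have hfin2 : volume S ≠ ⊤ :=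
      ne_of_lt (lt_of_le_of_lt (measure_mono hS) measure_Ico_lt_top)
    have := ENNReal.toReal_mono (ENNReal.add_ne_top.2 ⟨hfin1, hfin2⟩) this
    rw [ENNReal.toReal_add hfin1 hfin2, Real.volume_Ico, ENNReal.toReal_ofReal hL.le] at this
    linarith
  have hlow := h.lower hab hlampos hGm (diff_subset)
  have hbound : (b - a) / 2 ≤ (volume G).toReal - (Real.log K + 1) / lam * (b - a) := by
    have e1 : (Real.log K + 1) / lam * (b - a) = (b - a) / 4 := by
      rw [hlam]; field_simp
    rw [e1]
    linarith
  have hsplit : ∫ x in Set.Ico a b, ω x = (∫ x in S, ω x) + ∫ x in G, ω x := by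
    rw [hGdef, ← setIntegral_union (Set.disjoint_sdiff_right) (hGm)
      (h.intOn hS) (h.intOn diff_subset)]
    congr 1
    rw [Set.union_diff_cancel hS]
  have hGlow : Real.exp (-lam) / 2 * ∫ x in Set.Ico a b, ω x ≤ ∫ x in G, ω x := by
    have step : Real.exp (-lam) * ((b - a)⁻¹ * ∫ s in Set.Ico a b, ω s) * ((b - a) / 2)
        ≤ ∫ x in G, ω x := by
      refine le_trans ?_ hlow
      apply mul_le_mul_of_nonneg_left hbound
      exact mul_nonneg (Real.exp_pos _).le (h.avg_pos hab).le
    calc Real.exp (-lam) / 2 * ∫ x in Set.Ico a b, ω x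
        = Real.exp (-lam) * ((b - a)⁻¹ * ∫ s in Set.Ico a b, ω s) * ((b - a) / 2) := by
          field_simp
      _ ≤ ∫ x in G, ω x := step
  have hnn := h.setInt_nonneg (Set.Ico a b)
  rw [hlam] at hGlow
  linarith

/-- Doubling-type estimate: a subinterval of proportion at least `1/20`
carries a definite proportion of the mass. -/
theorem GW.doubling (h : GW ω K) {a b a' b' : ℝ} (h1 : a ≤ a') (h2 : a' < b') (h3 : b' ≤ b)
    (h4 : b - a ≤ 20 * (b' - a')) :
    Real.exp (-(40 * (Real.log K + 1))) / 40 * ∫ x in Set.Ico a b, ω x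
      ≤ ∫ x in Set.Ico a' b', ω x := by
  have hab : a < b := lt_of_le_of_lt h1 (lt_of_lt_of_le h2 h3)
  have hL : 0 < b - a := sub_pos.2 hab
  have hA : 0 < Real.log K + 1 := by
    have : (0:ℝ) ≤ Real.log K := Real.log_nonneg h.oneleK
    linarith
  set lam : ℝ := 40 * (Real.log K + 1) with hlam
  have hlampos : 0 < lam := by positivity
  have hsub : Set.Ico a' b' ⊆ Set.Ico a b := Set.Ico_subset_Ico h1 h3
  have hlow := h.lower hab hlampos measurableSet_Ico hsub
  have hbound : (b - a) / 40 ≤ (volume (Set.Ico a' b')).toReal - (Real.log K + 1) / lam * (b - a) := by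
    have e1 : (Real.log K + 1) / lam * (b - a) = (b - a) / 40 := by
      rw [hlam]; field_simp
    rw [e1, Real.volume_Ico, ENNReal.toReal_ofReal (le_of_lt (sub_pos.2 h2))]
    linarith
  have step : Real.exp (-lam) * ((b - a)⁻¹ * ∫ s in Set.Ico a b, ω s) * ((b - a) / 40)
      ≤ ∫ x in Set.Ico a' b', ω x := by
    refine le_trans ?_ hlow
    apply mul_le_mul_of_nonneg_left hbound
    exact mul_nonneg (Real.exp_pos _).le (h.avg_pos hab).le
  calc Real.exp (-(40 * (Real.log K + 1))) / 40 * ∫ x in Set.Ico a b, ω x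
      = Real.exp (-lam) * ((b - a)⁻¹ * ∫ s in Set.Ico a b, ω s) * ((b - a) / 40) := by
        rw [hlam]; field_simp
    _ ≤ ∫ x in Set.Ico a' b', ω x := step

/-! ### The weighted measure -/

noncomputable def nu (ω : ℝ → ℝ) : Measure ℝ :=
  volume.withDensity fun x => ENNReal.ofReal (ω x)

theorem nu_apply (ω : ℝ → ℝ) {G : Set ℝ} (hG : MeasurableSet G) :
    nu ω G = ∫⁻ x in G, ENNReal.ofReal (ω x) :=
  withDensity_apply _ hG

theorem nu_null (ω : ℝ → ℝ) {G : Set ℝ} (hG : volume G = 0) : nu ω G = 0 :=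
  (withDensity_absolutelyContinuous volume _) hG

theorem GW.nu_eq (h : GW ω K) {a b : ℝ} {G : Set ℝ} (hGm : MeasurableSet G)
    (hG : G ⊆ Set.Ico a b) : nu ω G = ENNReal.ofReal (∫ x in G, ω x) := by
  rw [nu_apply _ hGm, ← ofReal_integral_eq_lintegral_ofReal (h.intOn hG)
    (Filter.Eventually.of_forall fun x => (h.pos x).le)]

/-! ### Dyadic subintervals -/

/-- The `j`-th dyadic subinterval of generation `n` of `Ico a (a+L)`. -/
def dy (a L : ℝ) (n j : ℕ) : Set ℝ :=
  Set.Ico (a + L / 2 ^ n * j) (a + L / 2 ^ n * (j + 1))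

theorem dy_meas {a L : ℝ} (n j : ℕ) : MeasurableSet (dy a L n j) := by
  rw [dy]; exact measurableSet_Ico

theorem dy_nonempty {a L : ℝ} (hL : 0 < L) (n j : ℕ) : (dy a L n j).Nonempty := by
  refine Set.nonempty_Ico.2 ?_
  have h2 : (0:ℝ) < L / 2 ^ n := by positivity
  nlinarith [h2]

theorem dy_vol {a L : ℝ} (hL : 0 < L) (n j : ℕ) :
    volume (dy a L n j) = ENNReal.ofReal (L / 2 ^ n) := by
  rw [dy, Real.volume_Ico]
  congr 1
  ring

theorem dy_subset {a L : ℝ} (hL : 0 < L) {n j : ℕ} (hj : j < 2 ^ n) :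
    dy a L n j ⊆ Set.Ico a (a + L) := by
  apply Set.Ico_subset_Ico
  · have h2 : (0:ℝ) ≤ L / 2 ^ n * j := by positivity
    linarith
  · have hj' : (j:ℝ) + 1 ≤ 2 ^ n := by
      have : ((j:ℕ) : ℝ) + 1 = ((j + 1 : ℕ) : ℝ) := by push_cast; ring
      rw [this]
      exact_mod_cast Nat.succ_le_of_lt hj
    have h2 : (0:ℝ) < (2:ℝ) ^ n := by positivity
    have : L / 2 ^ n * ((j:ℝ) + 1) ≤ L / 2 ^ n * 2 ^ n := by
      apply mul_le_mul_of_nonneg_left hj' (by positivity)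
    rw [div_mul_cancel₀ _ (ne_of_gt h2)] at this
    linarith

theorem dy_parent {a L : ℝ} (hL : 0 < L) (n j : ℕ) :
    dy a L (n + 1) j ⊆ dy a L n (j / 2) := by
  obtain ⟨q, r, hr, hj⟩ : ∃ q r, r < 2 ∧ j = 2 * q + r :=
    ⟨j / 2, j % 2, Nat.mod_lt _ (by norm_num), (Nat.div_add_mod j 2).symm ▸ by
      omega⟩
  have hq : j / 2 = q := by omega
  rw [hq]
  have h2 : (0:ℝ) < (2:ℝ) ^ n := by positivity
  have hw : L / 2 ^ (n + 1) * 2 = L / 2 ^ n := by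
    rw [pow_succ]; field_simp
  apply Set.Ico_subset_Ico
  · have : L / 2 ^ n * q ≤ L / 2 ^ (n+1) * j := by
      have hjq : (2:ℝ) * q ≤ (j:ℝ) := by
        have : (j:ℝ) = 2 * q + r := by exact_mod_cast hj
        have hr0 : (0:ℝ) ≤ r := Nat.cast_nonneg r
        linarith
      calc L / 2 ^ n * q = L / 2 ^ (n+1) * (2 * q) := by rw [← hw]; ring
        _ ≤ L / 2 ^ (n+1) * j := mul_le_mul_of_nonneg_left hjq (by positivity)
    linarith
  · have : L / 2 ^ (n+1) * ((j:ℝ) + 1) ≤ L / 2 ^ n * ((q:ℝ) + 1) := by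
      have hjq : (j:ℝ) + 1 ≤ 2 * ((q:ℝ) + 1) := by
        have : (j:ℝ) = 2 * q + r := by exact_mod_cast hj
        have hr1 : (r:ℝ) ≤ 1 := by exact_mod_cast Nat.lt_succ_iff.1 hr
        linarith
      calc L / 2 ^ (n+1) * ((j:ℝ) + 1) ≤ L / 2 ^ (n+1) * (2 * ((q:ℝ) + 1)) :=
            mul_le_mul_of_nonneg_left hjq (by positivity)
        _ = L / 2 ^ n * ((q:ℝ) + 1) := by rw [← hw]; ring
    linarith

theorem dy_anc {a L : ℝ} (hL : 0 < L) {m n : ℕ} (hmn : m ≤ n) (j : ℕ) :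
    dy a L n j ⊆ dy a L m (j / 2 ^ (n - m)) := by
  obtain ⟨k, rfl⟩ : ∃ k, n = m + k := ⟨n - m, by omega⟩
  clear hmn
  induction k generalizing j with
  | zero => simp [dy]
  | succ k ih =>
    calc dy a L (m + (k+1)) j ⊆ dy a L (m + k) (j / 2) := dy_parent hL _ j
      _ ⊆ dy a L m ((j / 2) / 2 ^ (m + k - m)) := ih (j / 2)
      _ = dy a L m (j / 2 ^ (m + (k+1) - m)) := by
          congr 1
          rw [Nat.div_div_eq_div_mul]
          congr 1
          have e1 : m + k - m = k := by omega
          have e2 : m + (k+1) - m = k + 1 := by omega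
          rw [e1, e2, pow_succ]
          ring

theorem dy_disj {a L : ℝ} (hL : 0 < L) {n j j' : ℕ} (hjj : j ≠ j') :
    Disjoint (dy a L n j) (dy a L n j') := by
  wlog hlt : j < j' generalizing j j'
  · exact (this hjj.symm (by omega)).symm
  apply Set.Ico_disjoint_Ico.2
  have hj1 : (j:ℝ) + 1 ≤ (j':ℝ) := by exact_mod_cast Nat.succ_le_of_lt hlt
  have h2 : (0:ℝ) ≤ L / 2 ^ n := by positivity
  have : L / 2 ^ n * ((j:ℝ) + 1) ≤ L / 2 ^ n * (j':ℝ) :=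
    mul_le_mul_of_nonneg_left hj1 h2
  apply le_trans (min_le_left _ _)
  apply le_trans _ (le_max_right _ _)
  linarith

theorem dy_mem {a L : ℝ} (hL : 0 < L) {x : ℝ} (hx : x ∈ Set.Ico a (a + L)) (n : ℕ) :
    x ∈ dy a L n (⌊(x - a) * 2 ^ n / L⌋₊) ∧ (⌊(x - a) * 2 ^ n / L⌋₊) < 2 ^ n := by
  have h2 : (0:ℝ) < (2:ℝ) ^ n := by positivity
  set y : ℝ := (x - a) * 2 ^ n / L with hy
  have hy0 : 0 ≤ y := by
    have hxa0 : (0:ℝ) ≤ x - a := sub_nonneg.2 hx.1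
    apply div_nonneg _ hL.le
    positivity
  have hfl : (⌊y⌋₊ : ℝ) ≤ y := Nat.floor_le hy0
  have hfl2 : y < ⌊y⌋₊ + 1 := Nat.lt_floor_add_one y
  constructor
  · constructor
    · have : L / 2 ^ n * ⌊y⌋₊ ≤ L / 2 ^ n * y := mul_le_mul_of_nonneg_left hfl (by positivity)
      have e : L / 2 ^ n * y = x - a := by
        rw [hy]; field_simp
      rw [e] at this
      linarith
    · have : L / 2 ^ n * y < L / 2 ^ n * (⌊y⌋₊ + 1) := by
        apply mul_lt_mul_of_pos_left hfl2 (by positivity)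
      have e : L / 2 ^ n * y = x - a := by
        rw [hy]; field_simp
      rw [e] at this
      linarith
  · rw [Nat.floor_lt hy0]
    have hxa : x - a < L := by
      have := hx.2; linarith
    have hlt : y < (2:ℝ) ^ n := by
      rw [hy, div_lt_iff₀ hL]
      nlinarith
    exact lt_of_lt_of_eq hlt (by push_cast; ring)

theorem dy_nest {a L : ℝ} (hL : 0 < L) {m n i j : ℕ} (hmn : m ≤ n)
    (hnd : ¬ Disjoint (dy a L n j) (dy a L m i)) : dy a L n j ⊆ dy a L m i := by
  have h1 := @dy_anc a L hL m n hmn j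
  by_cases hij : i = j / 2 ^ (n - m)
  · rw [hij]; exact h1
  · exfalso
    apply hnd
    have hdisj := @dy_disj a L hL m _ _ (Ne.symm hij)
    exact hdisj.mono_left h1

theorem dy_width {a L : ℝ} (hL : 0 < L) {n j : ℕ} {x : ℝ} (hx : x ∈ dy a L n j) :
    dy a L n j ⊆ Metric.closedBall x (L / 2 ^ n) := by
  intro y hy
  rw [Metric.mem_closedBall, Real.dist_eq, abs_le]
  rcases hx with ⟨hx1, hx2⟩
  rcases hy with ⟨hy1, hy2⟩
  constructor <;> nlinarith

/-! ### Lebesgue density points -/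

theorem tendsto_halving (L : ℝ) (hL : 0 < L) :
    Filter.Tendsto (fun n : ℕ => L / 2 ^ n) Filter.atTop (nhdsWithin 0 (Set.Ioi 0)) := by
  apply tendsto_nhdsWithin_of_tendsto_nhds_of_eventually_within
  · have h0 : Filter.Tendsto (fun n : ℕ => L * (1/2 : ℝ) ^ n) Filter.atTop (nhds 0) := by
      have h0 := tendsto_pow_atTop_nhds_zero_of_lt_one (by norm_num : (0:ℝ) ≤ 1/2)
        (by norm_num : (1/2:ℝ) < 1)
      simpa using h0.const_mul L
    refine h0.congr (fun n => ?_)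
    rw [div_eq_mul_inv]
    congr 1
    rw [← inv_pow]
    norm_num
  · apply Filter.Eventually.of_forall
    intro n
    have : (0:ℝ) < L / 2 ^ n := by positivity
    exact this

theorem dens (S : Set ℝ) {c : ℝ} (hc : c < 1) :
    ∀ᵐ x ∂(volume.restrict S), ∀ᶠ r in nhdsWithin (0:ℝ) (Set.Ioi 0),
      ENNReal.ofReal (c * (2 * r)) ≤ volume (S ∩ Metric.closedBall x r) := by
  filter_upwards [Besicovitch.ae_tendsto_measure_inter_div volume S] with x hx
  rcases le_or_gt c 0 with hc0 | hc0
  · filter_upwards [self_mem_nhdsWithin] with r hr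
    have hr0 : (0:ℝ) < r := hr
    have : c * (2 * r) ≤ 0 := mul_nonpos_of_nonpos_of_nonneg hc0 (by linarith)
    rw [ENNReal.ofReal_eq_zero.2 this]
    exact zero_le
  · have hlt : (ENNReal.ofReal c) < 1 := by
      rw [← ENNReal.ofReal_one]
      exact ENNReal.ofReal_lt_ofReal_iff_of_nonneg hc0.le |>.2 hc
    have hev := hx.eventually (lt_mem_nhds hlt)
    filter_upwards [hev, self_mem_nhdsWithin] with r hr1 hr2
    have hr0 : (0:ℝ) < r := hr2
    have hB : volume (Metric.closedBall x r) = ENNReal.ofReal (2 * r) := by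
      rw [Real.volume_closedBall]
    have hne : volume (Metric.closedBall x r) ≠ 0 := by
      rw [hB]
      simp only [ne_eq, ENNReal.ofReal_eq_zero, not_le]
      linarith
    have hnetop : volume (Metric.closedBall x r) ≠ ⊤ := by
      rw [hB]; exact ENNReal.ofReal_ne_top
    have hmul := (ENNReal.le_div_iff_mul_le (Or.inl hne) (Or.inl hnetop)).1 hr1.le
    rw [hB, ← ENNReal.ofReal_mul hc0.le] at hmul
    exact hmul

/-! ### The Calderón–Zygmund iteration -/

theorem GW.alphaBeta_nu (h : GW ω K) {a b : ℝ} (hab : a < b)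
    {S : Set ℝ} (hSm : MeasurableSet S) (hS : S ⊆ Set.Ico a b)
    (hvol : (volume S).toReal ≤ (b - a) / 4) :
    nu ω S ≤ ENNReal.ofReal (1 - Real.exp (-(4 * (Real.log K + 1))) / 2) * nu ω (Set.Ico a b) := by
  rw [h.nu_eq hSm hS, h.nu_eq measurableSet_Ico (le_refl _),
    ← ENNReal.ofReal_mul (by
      have : Real.exp (-(4 * (Real.log K + 1))) ≤ 1 := by
        apply Real.exp_le_one_iff.2
        have : (0:ℝ) ≤ Real.log K := Real.log_nonneg h.oneleK
        linarith
      linarith)]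
  exact ENNReal.ofReal_le_ofReal (h.alphaBeta hab hSm hS hvol)

theorem GW.CZ (h : GW ω K) : ∀ k : ℕ, ∀ a b : ℝ, a < b → ∀ S : Set ℝ,
    MeasurableSet S → S ⊆ Set.Ico a b →
    (volume S).toReal ≤ (1/8 : ℝ)^k * (b - a) →
    nu ω S ≤ (ENNReal.ofReal (1 - Real.exp (-(4 * (Real.log K + 1))) / 2))^k
      * nu ω (Set.Ico a b) := by
  intro k
  induction k with
  | zero =>
    intro a b hab S hSm hS _
    simpa using measure_mono hS
  | succ k ih =>
    intro a b hab S hSm hS hvol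
    have hL : 0 < b - a := sub_pos.2 hab
    set L : ℝ := b - a with hLdef
    set β : ℝ := 1 - Real.exp (-(4 * (Real.log K + 1))) / 2 with hβdef
    set t : ℝ := (1/8 : ℝ)^k / 2 with htdef
    have ht0 : 0 < t := by positivity
    have ht1 : t ≤ 1/2 := by
      rw [htdef]
      have : (1/8:ℝ)^k ≤ 1 := pow_le_one₀ (by norm_num) (by norm_num)
      linarith
    have hIco : Set.Ico a (a + L) = Set.Ico a b := by
      rw [hLdef]; congr 1; ring
    have hfin : ∀ G : Set ℝ, G ⊆ Set.Ico a b → volume G ≠ ⊤ := fun G hG =>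
      ne_of_lt (lt_of_le_of_lt (measure_mono hG) measure_Ico_lt_top)
    -- the predicate and selection
    set P : ℕ → ℕ → Prop :=
      fun n j => j < 2^n ∧ t * (L / 2^n) < (volume (S ∩ dy a L n j)).toReal with hPdef
    set Sel : Set (ℕ × ℕ) :=
      {q | P q.1 q.2 ∧ ∀ m < q.1, ¬ P m (q.2 / 2^(q.1 - m))} with hSeldef
    have hP0 : ∀ j, ¬ P 0 j := by
      intro j hPj
      rcases hPj with ⟨hj, hPj⟩
      interval_cases j
      have hdy0 : dy a L 0 0 = Set.Ico a b := by
        rw [dy]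
        simp only [pow_zero, Nat.cast_zero, Nat.cast_one]
        rw [← hIco]
        congr 1 <;> ring
      rw [hdy0, Set.inter_eq_self_of_subset_left hS] at hPj
      have : (volume S).toReal ≤ t * (L / 2^0) := by
        simp only [pow_zero]
        calc (volume S).toReal ≤ (1/8:ℝ)^(k+1) * L := hvol
          _ ≤ t * (L / 1) := by
              rw [htdef, div_one]
              have : (1/8:ℝ)^(k+1) = (1/8)^k * (1/8) := pow_succ _ _
              rw [this]
              nlinarith [pow_pos (show (0:ℝ) < 1/8 by norm_num) k, hL]
      linarith
    -- members of Sel have positive generation and a parent with small density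
    have hSel_parent : ∀ q ∈ Sel,
        (volume (S ∩ dy a L q.1 q.2)).toReal ≤ (1/8:ℝ)^k * (L / 2^q.1) := by
      rintro ⟨n, j⟩ hq
      rcases hq with ⟨hP1, hmin⟩
      rcases Nat.eq_zero_or_pos n with rfl | hn
      · exact absurd hP1 (hP0 j)
      obtain ⟨n', rfl⟩ : ∃ n', n = n' + 1 := ⟨n - 1, by omega⟩
      have hjn : j < 2^(n'+1) := hP1.1
      have hpar : ¬ P n' (j / 2) := by
        have hh := hmin n' (by omega)
        have hone : n' + 1 - n' = 1 := by omega
        simpa [hone] using hh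
      have hj2 : j / 2 < 2^n' := by
        have h2 : 2^(n'+1) = 2 * 2^n' := by rw [pow_succ]; ring
        omega
      have hple : (volume (S ∩ dy a L n' (j / 2))).toReal ≤ t * (L / 2 ^ n') := by
        by_contra hcon
        push_neg at hcon
        exact hpar ⟨hj2, hcon⟩
      have hsub2 : S ∩ dy a L (n'+1) j ⊆ S ∩ dy a L n' (j / 2) := by
        apply Set.inter_subset_inter_right
        exact dy_parent hL n' j
      calc (volume (S ∩ dy a L (n'+1) j)).toReal
          ≤ (volume (S ∩ dy a L n' (j / 2))).toReal := by
            apply ENNReal.toReal_mono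
            · apply hfin
              rw [← hIco]
              exact le_trans (Set.inter_subset_right) (dy_subset hL hj2)
            · exact measure_mono hsub2
        _ ≤ t * (L / 2^n') := hple
        _ = (1/8:ℝ)^k * (L / 2^(n'+1)) := by
            rw [htdef, pow_succ]
            ring
    -- pairwise disjointness of the selected intervals
    have haux : ∀ n j m i, (n,j) ∈ Sel → (m,i) ∈ Sel → n ≤ m → (n,j) ≠ (m,i) →
        Disjoint (dy a L n j) (dy a L m i) := by
      intro n j m i hq hq' hnm hne
      by_contra hnd
      have h1 := @dy_anc a L hL n m hnm i
      have hnd2 : ¬ Disjoint (dy a L n j) (dy a L n (i / 2^(m-n))) := by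
        intro hd
        exact hnd (Set.disjoint_of_subset_right h1 hd)
      have hji : j = i / 2^(m-n) := by
        by_contra hji
        exact hnd2 (@dy_disj a L hL n _ _ hji)
      rcases eq_or_lt_of_le hnm with rfl | hlt
      · apply hne
        have : i / 2^(n-n) = i := by simp
        rw [this] at hji
        rw [hji]
      · exact hq'.2 n hlt (by rw [← hji]; exact hq.1)
    have hSel_disj : Sel.PairwiseDisjoint (fun q : ℕ × ℕ => dy a L q.1 q.2) := by
      rintro ⟨n,j⟩ hq ⟨m,i⟩ hq' hne
      simp only [Function.onFun]
      rcases le_total n m with hnm | hmn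
      · exact haux n j m i hq hq' hnm hne
      · exact (haux m i n j hq' hq hmn (Ne.symm hne)).symm
    -- a.e. coverage of S by selected intervals
    classical
    set Ω : Set ℝ := ⋃ q ∈ Sel, dy a L q.1 q.2 with hΩ
    have hΩm : MeasurableSet Ω :=
      MeasurableSet.biUnion (Set.to_countable Sel) (fun q _ => dy_meas q.1 q.2)
    have hcov : ∀ᵐ x ∂(volume.restrict S), x ∈ Ω := by
      have hc2 : ((3:ℝ) + t)/4 < 1 := by linarith
      filter_upwards [dens S hc2, ae_restrict_mem hSm] with x hx hxS
      have hxI : x ∈ Set.Ico a (a + L) := by rw [hIco]; exact hS hxS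
      have hev : ∀ᶠ n : ℕ in Filter.atTop,
          ENNReal.ofReal (((3+t)/4) * (2 * (L / 2^n)))
            ≤ volume (S ∩ Metric.closedBall x (L / 2^n)) :=
        (tendsto_halving L hL).eventually hx
      rcases hev.exists with ⟨n, hn⟩
      obtain ⟨hxj, hjlt⟩ := dy_mem hL hxI n
      set j : ℕ := ⌊(x - a) * 2 ^ n / L⌋₊ with hj
      set w : ℝ := L / 2^n with hw
      have hw0 : 0 < w := by positivity
      have hsubB : dy a L n j ⊆ Metric.closedBall x w := dy_width hL hxj
      have hJfin : volume (S ∩ dy a L n j) ≠ ⊤ := by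
        apply ne_of_lt
        apply lt_of_le_of_lt (measure_mono (le_trans Set.inter_subset_right hsubB))
        rw [Real.volume_closedBall]
        exact ENNReal.ofReal_lt_top
      have hSdy : t * w < (volume (S ∩ dy a L n j)).toReal := by
        have hsplit : volume (S ∩ Metric.closedBall x w)
            ≤ volume (S ∩ dy a L n j) + volume (Metric.closedBall x w \ dy a L n j) := by
          refine le_trans (measure_mono ?_) (measure_union_le _ _)
          rintro y ⟨hyS, hyB⟩
          by_cases hyJ : y ∈ dy a L n j
          · exact Or.inl ⟨hyS, hyJ⟩
          · exact Or.inr ⟨hyB, hyJ⟩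
        have hdiff : volume (Metric.closedBall x w \ dy a L n j)
            = ENNReal.ofReal w := by
          rw [measure_diff hsubB (dy_meas n j).nullMeasurableSet
            (by rw [dy_vol hL]; exact ENNReal.ofReal_ne_top),
            Real.volume_closedBall, dy_vol hL, ← ENNReal.ofReal_sub _ hw0.le]
          congr 1
          ring
        have hcomb : ENNReal.ofReal (((3+t)/4) * (2 * w))
            ≤ volume (S ∩ dy a L n j) + ENNReal.ofReal w := by
          rw [← hdiff]
          exact le_trans hn hsplit
        have htoReal := ENNReal.toReal_mono
          (by exact ENNReal.add_ne_top.2 ⟨hJfin, ENNReal.ofReal_ne_top⟩) hcomb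
        rw [ENNReal.toReal_add hJfin ENNReal.ofReal_ne_top, ENNReal.toReal_ofReal hw0.le,
          ENNReal.toReal_ofReal (by positivity)] at htoReal
        nlinarith
      have hP : P n j := ⟨hjlt, hSdy⟩
      have hex : ∃ m, m ≤ n ∧ P m (j / 2^(n-m)) := ⟨n, le_refl n, by simpa using hP⟩
      set m₀ := Nat.find hex with hm₀
      obtain ⟨hm₀n, hPm₀⟩ := Nat.find_spec hex
      have hqSel : (m₀, j / 2^(n-m₀)) ∈ Sel := by
        refine ⟨hPm₀, ?_⟩
        intro m hm hPm
        apply Nat.find_min hex hm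
        refine ⟨by omega, ?_⟩
        have heq : (j / 2^(n-m₀)) / 2^(m₀ - m) = j / 2^(n-m) := by
          rw [Nat.div_div_eq_div_mul, ← pow_add]
          congr 2
          omega
        rwa [heq] at hPm
      exact Set.mem_biUnion hqSel (Set.mem_of_mem_of_subset hxj (@dy_anc a L hL m₀ n hm₀n j))
    -- null complement
    have hSdiff : volume (S \ Ω) = 0 := by
      have h0 : (volume.restrict S) Ωᶜ = 0 := by
        rw [ae_iff] at hcov
        exact hcov
      rw [Measure.restrict_apply hΩm.compl] at h0
      rw [show S \ Ω = Ωᶜ ∩ S by rw [Set.diff_eq, Set.inter_comm]]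
      exact h0
    have hνS : nu ω S ≤ nu ω (S ∩ Ω) := by
      have hle : nu ω S ≤ nu ω (S ∩ Ω) + nu ω (S \ Ω) := by
        refine le_trans (measure_mono ?_) (measure_union_le _ _)
        intro x hx
        by_cases hxΩ : x ∈ Ω
        · exact Or.inl ⟨hx, hxΩ⟩
        · exact Or.inr ⟨hx, hxΩ⟩
      rwa [nu_null ω hSdiff, add_zero] at hle
    -- the dyadic pieces are small in measure
    have hdyIco : ∀ q : ℕ × ℕ, q ∈ Sel → dy a L q.1 q.2 ⊆ Set.Ico a b := by
      rintro ⟨n, j⟩ hq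
      rw [← hIco]
      exact dy_subset hL hq.1.1
    -- decomposition of S ∩ Ω and Ω
    have hdecompS : nu ω (S ∩ Ω) = ∑' q : Sel, nu ω (S ∩ dy a L q.1.1 q.1.2) := by
      rw [hΩ, Set.inter_iUnion₂]
      exact measure_biUnion (Set.to_countable Sel)
        (hSel_disj.mono fun q => Set.inter_subset_right)
        (fun q _ => hSm.inter (dy_meas q.1 q.2))
    have hdecompΩ : nu ω Ω = ∑' q : Sel, nu ω (dy a L q.1.1 q.1.2) :=
      measure_biUnion (Set.to_countable Sel) hSel_disj (fun q _ => dy_meas q.1 q.2)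
    have hdecompΩvol : volume Ω = ∑' q : Sel, volume (dy a L q.1.1 q.1.2) :=
      measure_biUnion (Set.to_countable Sel) hSel_disj (fun q _ => dy_meas q.1 q.2)
    have hdecompSvol : volume (S ∩ Ω) = ∑' q : Sel, volume (S ∩ dy a L q.1.1 q.1.2) := by
      rw [hΩ, Set.inter_iUnion₂]
      exact measure_biUnion (Set.to_countable Sel)
        (hSel_disj.mono fun q => Set.inter_subset_right)
        (fun q _ => hSm.inter (dy_meas q.1 q.2))
    -- volume of Ω is at most L/4
    have hvolΩ : (volume Ω).toReal ≤ (b - a)/4 := by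
      have hstep : ENNReal.ofReal t * volume Ω ≤ volume S := by
        rw [hdecompΩvol, ← ENNReal.tsum_mul_left]
        have hperq : ∀ q : Sel, ENNReal.ofReal t * volume (dy a L q.1.1 q.1.2)
            ≤ volume (S ∩ dy a L q.1.1 q.1.2) := by
          rintro ⟨⟨n, j⟩, hq⟩
          have hPq : P n j := hq.1
          rw [dy_vol hL, ← ENNReal.ofReal_mul ht0.le]
          calc ENNReal.ofReal (t * (L / 2^n))
              ≤ ENNReal.ofReal ((volume (S ∩ dy a L n j)).toReal) :=
                ENNReal.ofReal_le_ofReal hPq.2.le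
            _ ≤ volume (S ∩ dy a L n j) := ENNReal.ofReal_toReal_le
        calc ∑' q : Sel, ENNReal.ofReal t * volume (dy a L q.1.1 q.1.2)
            ≤ ∑' q : Sel, volume (S ∩ dy a L q.1.1 q.1.2) := ENNReal.tsum_le_tsum hperq
          _ = volume (S ∩ Ω) := hdecompSvol.symm
          _ ≤ volume S := measure_mono Set.inter_subset_left
      have hSle : volume S ≤ ENNReal.ofReal t * ENNReal.ofReal (L/4) := by
        rw [← ENNReal.ofReal_mul ht0.le]
        rw [← ENNReal.ofReal_toReal (hfin S hS)]
        apply ENNReal.ofReal_le_ofReal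
        calc (volume S).toReal ≤ (1/8:ℝ)^(k+1) * L := hvol
          _ = t * (L/4) := by rw [htdef, pow_succ]; ring
      have hcancel : volume Ω ≤ ENNReal.ofReal (L/4) := by
        have ht0' : (ENNReal.ofReal t) ≠ 0 := by
          simp only [ne_eq, ENNReal.ofReal_eq_zero, not_le]
          exact ht0
        exact (ENNReal.mul_le_mul_iff_right ht0' ENNReal.ofReal_ne_top).1
          (le_trans hstep hSle)
      calc (volume Ω).toReal ≤ (ENNReal.ofReal (L/4)).toReal :=
            ENNReal.toReal_mono ENNReal.ofReal_ne_top hcancel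
        _ = L/4 := ENNReal.toReal_ofReal (by positivity)
        _ = (b - a)/4 := by rw [hLdef]
    have hΩIco : Ω ⊆ Set.Ico a b := by
      rw [hΩ]
      exact Set.iUnion₂_subset hdyIco
    -- per-piece estimate from the induction hypothesis
    have hperq2 : ∀ q : Sel, nu ω (S ∩ dy a L q.1.1 q.1.2)
        ≤ ENNReal.ofReal β ^ k * nu ω (dy a L q.1.1 q.1.2) := by
      rintro ⟨⟨n, j⟩, hq⟩
      have hab' : a + L / 2^n * (j:ℝ) < a + L / 2^n * ((j:ℝ) + 1) := by
        have : (0:ℝ) < L / 2^n := by positivity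
        nlinarith
      have happ := ih (a + L / 2^n * (j:ℝ)) (a + L / 2^n * ((j:ℝ) + 1)) hab'
        (S ∩ dy a L n j) (hSm.inter (dy_meas n j)) (Set.inter_subset_right)
        (by
          have he : (a + L / 2^n * ((j:ℝ) + 1)) - (a + L / 2^n * (j:ℝ)) = L / 2^n := by ring
          rw [he]
          exact hSel_parent (n, j) hq)
      exact happ
    -- final chain
    calc nu ω S ≤ nu ω (S ∩ Ω) := hνS
      _ = ∑' q : Sel, nu ω (S ∩ dy a L q.1.1 q.1.2) := hdecompS
      _ ≤ ∑' q : Sel, ENNReal.ofReal β ^ k * nu ω (dy a L q.1.1 q.1.2) :=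
          ENNReal.tsum_le_tsum hperq2
      _ = ENNReal.ofReal β ^ k * ∑' q : Sel, nu ω (dy a L q.1.1 q.1.2) :=
          ENNReal.tsum_mul_left
      _ = ENNReal.ofReal β ^ k * nu ω Ω := by rw [hdecompΩ]
      _ ≤ ENNReal.ofReal β ^ k * (ENNReal.ofReal β * nu ω (Set.Ico a b)) := by
          apply mul_le_mul_right
          exact h.alphaBeta_nu hab hΩm hΩIco hvolΩ
      _ = ENNReal.ofReal β ^ (k+1) * nu ω (Set.Ico a b) := by
          rw [pow_succ]
          ring

/-- Power decay estimate for the weighted measure of small sets. -/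
theorem GW.W (h : GW ω K) {a b γ : ℝ} (hab : a < b) (hγ0 : 0 < γ) (hγ1 : γ ≤ 1)
    {S : Set ℝ} (hSm : MeasurableSet S) (hS : S ⊆ Set.Ico a b)
    (hvol : (volume S).toReal ≤ γ * (b - a)) :
    nu ω S ≤ ENNReal.ofReal ((1 - Real.exp (-(4 * (Real.log K + 1))) / 2)⁻¹
        * γ ^ (Real.log (1 - Real.exp (-(4 * (Real.log K + 1))) / 2) / Real.log (1/8)))
      * nu ω (Set.Ico a b) := by
  set A : ℝ := Real.log K + 1 with hA
  have hA1 : 1 ≤ A := by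
    have := Real.log_nonneg h.oneleK
    rw [hA]; linarith
  set β : ℝ := 1 - Real.exp (-(4 * A)) / 2 with hβ
  have hexp1 : Real.exp (-(4*A)) ≤ 1 := Real.exp_le_one_iff.2 (by linarith)
  have hexp0 : 0 < Real.exp (-(4*A)) := Real.exp_pos _
  have hβ0 : (0:ℝ) < β := by rw [hβ]; linarith
  have hβ1 : β < 1 := by rw [hβ]; linarith
  have hρneg : Real.log (1/8 : ℝ) < 0 := Real.log_neg (by norm_num) (by norm_num)
  have hβneg : Real.log β < 0 := Real.log_neg hβ0 hβ1
  set δ : ℝ := Real.log β / Real.log (1/8) with hδ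
  have hδ0 : 0 ≤ δ := by
    rw [hδ]
    exact le_of_lt (div_pos_iff.2 (Or.inr ⟨hβneg, hρneg⟩))
  have hlogγ : Real.log γ ≤ 0 := Real.log_nonpos hγ0.le hγ1
  set v : ℝ := Real.log γ / Real.log (1/8) with hv
  have hv0 : 0 ≤ v := by
    rw [hv]
    exact div_nonneg_iff.2 (Or.inr ⟨hlogγ, hρneg.le⟩)
  set k := ⌊v⌋₊ with hk
  have hk1 : (k:ℝ) ≤ v := Nat.floor_le hv0
  have hk2 : v < k + 1 := Nat.lt_floor_add_one v
  have hvlog : v * Real.log (1/8) = Real.log γ := by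
    rw [hv]
    field_simp
  have hγk : γ ≤ (1/8:ℝ)^k := by
    have h1 : Real.log γ ≤ k * Real.log (1/8) := by
      have := mul_le_mul_of_nonpos_right hk1 hρneg.le
      rw [hvlog] at this
      exact this
    calc γ = Real.exp (Real.log γ) := (Real.exp_log hγ0).symm
      _ ≤ Real.exp (k * Real.log (1/8)) := Real.exp_le_exp.2 h1
      _ = (1/8:ℝ)^k := by
          rw [Real.exp_nat_mul, Real.exp_log (show (0:ℝ) < 1/8 by norm_num)]
  have hγδ : β^(k+1) ≤ γ ^ δ := by
    have h2 : ((k:ℝ)+1) * Real.log (1/8) ≤ Real.log γ := by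
      have := mul_le_mul_of_nonpos_right hk2.le hρneg.le
      rw [hvlog] at this
      exact this
    have hδρ : δ * Real.log (1/8) = Real.log β := by
      rw [hδ]
      field_simp
    have h3 : ((k:ℝ)+1) * Real.log β ≤ δ * Real.log γ := by
      calc ((k:ℝ)+1) * Real.log β = δ * (((k:ℝ)+1) * Real.log (1/8)) := by
            rw [← hδρ]; ring
        _ ≤ δ * Real.log γ := mul_le_mul_of_nonneg_left h2 hδ0
    calc β^(k+1) = Real.exp (((k+1 : ℕ):ℝ) * Real.log β) := by
          rw [Real.exp_nat_mul, Real.exp_log hβ0]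
      _ ≤ Real.exp (δ * Real.log γ) := by
          apply Real.exp_le_exp.2
          push_cast
          exact h3
      _ = γ ^ δ := by
          rw [Real.rpow_def_of_pos hγ0, mul_comm]
  have hCZ := h.CZ k a b hab S hSm hS (le_trans hvol
    (mul_le_mul_of_nonneg_right hγk (le_of_lt (sub_pos.2 hab))))
  refine le_trans hCZ ?_
  rw [← ENNReal.ofReal_pow hβ0.le]
  apply mul_le_mul_left
  apply ENNReal.ofReal_le_ofReal
  have he : β ^ k = β⁻¹ * β^(k+1) := by
    rw [pow_succ]
    field_simp
  rw [he]
  exact mul_le_mul_of_nonneg_left hγδ (inv_nonneg.2 hβ0.le)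

/-! ### Stopping radii -/

theorem vol_inter_Icc_eq_Ioo (E : Set ℝ) (u v : ℝ) :
    volume (E ∩ Set.Icc u v) = volume (E ∩ Set.Ioo u v) := by
  apply le_antisymm
  · have hsub : E ∩ Set.Icc u v ⊆ (E ∩ Set.Ioo u v) ∪ ({u} ∪ {v}) := by
      rintro x ⟨hxE, hx1, hx2⟩
      rcases eq_or_lt_of_le hx1 with rfl | h1
      · exact Or.inr (Or.inl rfl)
      rcases eq_or_lt_of_le hx2 with rfl | h2
      · exact Or.inr (Or.inr rfl)
      · exact Or.inl ⟨hxE, h1, h2⟩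
    calc volume (E ∩ Set.Icc u v) ≤ volume ((E ∩ Set.Ioo u v) ∪ ({u} ∪ {v})) :=
          measure_mono hsub
      _ ≤ volume (E ∩ Set.Ioo u v) + volume ({u} ∪ {v}) := measure_union_le _ _
      _ ≤ volume (E ∩ Set.Ioo u v) + (volume {u} + volume ({v} : Set ℝ)) := by
          exact add_le_add_right (measure_union_le _ _) _
      _ = volume (E ∩ Set.Ioo u v) := by simp
  · exact measure_mono (Set.inter_subset_inter_right _ Set.Ioo_subset_Icc_self)

theorem vol_inter_Ico_eq_Ioo (E : Set ℝ) (u v : ℝ) :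
    volume (E ∩ Set.Ico u v) = volume (E ∩ Set.Ioo u v) := by
  apply le_antisymm
  · calc volume (E ∩ Set.Ico u v) ≤ volume (E ∩ Set.Icc u v) :=
        measure_mono (Set.inter_subset_inter_right _ Set.Ico_subset_Icc_self)
      _ = volume (E ∩ Set.Ioo u v) := vol_inter_Icc_eq_Ioo E u v
  · exact measure_mono (Set.inter_subset_inter_right _ Set.Ioo_subset_Ico_self)

theorem phi_cont (E : Set ℝ) (hE : volume E ≠ ⊤) (y : ℝ) :
    Continuous fun r : ℝ => (volume (E ∩ Set.Ioo (y - r) (y + r))).toReal := by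
  have hfin : ∀ r : ℝ, volume (E ∩ Set.Ioo (y - r) (y + r)) ≠ ⊤ := fun r =>
    ne_of_lt (lt_of_le_of_lt (measure_mono Set.inter_subset_left) (lt_top_iff_ne_top.2 hE))
  have claim : ∀ r1 r2 : ℝ, r1 ≤ r2 →
      (volume (E ∩ Set.Ioo (y - r1) (y + r1))).toReal
        ≤ (volume (E ∩ Set.Ioo (y - r2) (y + r2))).toReal ∧
      (volume (E ∩ Set.Ioo (y - r2) (y + r2))).toReal
        ≤ (volume (E ∩ Set.Ioo (y - r1) (y + r1))).toReal + 2 * (r2 - r1) := by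
    intro r1 r2 h12
    constructor
    · apply ENNReal.toReal_mono (hfin r2)
      apply measure_mono
      apply Set.inter_subset_inter_right
      apply Set.Ioo_subset_Ioo <;> linarith
    · have hsub : E ∩ Set.Ioo (y - r2) (y + r2)
          ⊆ (E ∩ Set.Ioo (y - r1) (y + r1)) ∪
            (Set.Ioc (y - r2) (y - r1) ∪ Set.Ico (y + r1) (y + r2)) := by
        rintro x ⟨hxE, hx1, hx2⟩
        by_cases hx : y - r1 < x ∧ x < y + r1
        · exact Or.inl ⟨hxE, hx⟩
        · push_neg at hx
          rcases le_or_gt x (y - r1) with h | h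
          · exact Or.inr (Or.inl ⟨hx1, h⟩)
          · exact Or.inr (Or.inr ⟨hx h, hx2⟩)
      have hle : volume (E ∩ Set.Ioo (y - r2) (y + r2))
          ≤ volume (E ∩ Set.Ioo (y - r1) (y + r1))
            + (ENNReal.ofReal (r2 - r1) + ENNReal.ofReal (r2 - r1)) := by
        calc volume (E ∩ Set.Ioo (y - r2) (y + r2))
            ≤ volume ((E ∩ Set.Ioo (y - r1) (y + r1)) ∪
              (Set.Ioc (y - r2) (y - r1) ∪ Set.Ico (y + r1) (y + r2))) := measure_mono hsub
          _ ≤ volume (E ∩ Set.Ioo (y - r1) (y + r1))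
              + volume (Set.Ioc (y - r2) (y - r1) ∪ Set.Ico (y + r1) (y + r2)) :=
              measure_union_le _ _
          _ ≤ volume (E ∩ Set.Ioo (y - r1) (y + r1))
              + (volume (Set.Ioc (y - r2) (y - r1)) + volume (Set.Ico (y + r1) (y + r2))) :=
              add_le_add_right (measure_union_le _ _) _
          _ = volume (E ∩ Set.Ioo (y - r1) (y + r1))
              + (ENNReal.ofReal (r2 - r1) + ENNReal.ofReal (r2 - r1)) := by
              rw [Real.volume_Ioc, Real.volume_Ico]
              congr 2 <;> ring_nf
      have := ENNReal.toReal_mono (by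
        exact ENNReal.add_ne_top.2 ⟨hfin r1,
          ENNReal.add_ne_top.2 ⟨ENNReal.ofReal_ne_top, ENNReal.ofReal_ne_top⟩⟩) hle
      rw [ENNReal.toReal_add (hfin r1)
          (ENNReal.add_ne_top.2 ⟨ENNReal.ofReal_ne_top, ENNReal.ofReal_ne_top⟩),
        ENNReal.toReal_add ENNReal.ofReal_ne_top ENNReal.ofReal_ne_top,
        ENNReal.toReal_ofReal (by linarith)] at this
      linarith
  apply LipschitzWith.continuous (K := 2)
  apply LipschitzWith.of_dist_le_mul
  intro r1 r2
  have main : ∀ s1 s2 : ℝ, s1 ≤ s2 →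
      dist (volume (E ∩ Set.Ioo (y - s1) (y + s1))).toReal
        (volume (E ∩ Set.Ioo (y - s2) (y + s2))).toReal ≤ 2 * dist s1 s2 := by
    intro s1 s2 h12
    obtain ⟨hm, hu⟩ := claim s1 s2 h12
    rw [Real.dist_eq, Real.dist_eq, abs_of_nonpos (by linarith), abs_of_nonpos (by linarith)]
    linarith
  rcases le_total r1 r2 with h | h
  · exact main r1 r2 h
  · rw [dist_comm, dist_comm r1 r2]
    exact main r2 r1 h

/-- Almost every point of `E` admits a stopping radius for density `γ`. -/
theorem stopping (E : Set ℝ) (hEfin : volume E < ⊤) {γ : ℝ} (hγ0 : 0 < γ) (hγ1 : γ < 1) :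
    ∀ᵐ x ∂(volume.restrict E), ∃ R : ℝ, 0 < R ∧
      γ * (2*R) ≤ (volume (E ∩ Set.Ioo (x - R) (x + R))).toReal ∧
      ∀ R' > R, (volume (E ∩ Set.Ioo (x - R') (x + R'))).toReal < γ * (2*R') := by
  have hc : ((1:ℝ) + γ)/2 < 1 := by linarith
  filter_upwards [dens E hc] with x hx
  -- a small radius with high density
  obtain ⟨R₀, hR₀d, hR₀pos⟩ : ∃ R₀, ENNReal.ofReal (((1+γ)/2) * (2*R₀))
      ≤ volume (E ∩ Metric.closedBall x R₀) ∧ 0 < R₀ :=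
    (hx.and self_mem_nhdsWithin).exists
  set φ : ℝ → ℝ := fun r => (volume (E ∩ Set.Ioo (x - r) (x + r))).toReal with hφ
  have hφc : Continuous φ := phi_cont E (ne_of_lt hEfin) x
  have hEfin' : ∀ r : ℝ, volume (E ∩ Set.Ioo (x - r) (x + r)) ≠ ⊤ := fun r =>
    ne_of_lt (lt_of_le_of_lt (measure_mono Set.inter_subset_left) hEfin)
  have hφR₀ : γ * (2*R₀) ≤ φ R₀ := by
    have hIcc : Metric.closedBall x R₀ = Set.Icc (x - R₀) (x + R₀) := Real.closedBall_eq_Icc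
    rw [hIcc, vol_inter_Icc_eq_Ioo] at hR₀d
    have h1 : ((1+γ)/2) * (2*R₀) ≤ φ R₀ := by
      rw [hφ]
      have := ENNReal.toReal_mono (hEfin' R₀) hR₀d
      rw [ENNReal.toReal_ofReal (by positivity)] at this
      exact this
    nlinarith
  set Γ : Set ℝ := {R | R₀ ≤ R ∧ γ * (2*R) ≤ φ R} with hΓ
  have hΓne : Γ.Nonempty := ⟨R₀, le_refl _, hφR₀⟩
  have hΓbdd : BddAbove Γ := by
    refine ⟨(volume E).toReal / (2*γ), ?_⟩
    rintro R ⟨_, hR2⟩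
    have hφle : φ R ≤ (volume E).toReal := by
      rw [hφ]
      exact ENNReal.toReal_mono (ne_of_lt hEfin) (measure_mono Set.inter_subset_left)
    rw [le_div_iff₀ (by positivity)]
    nlinarith
  have hΓc : IsClosed Γ := by
    rw [hΓ]
    have h1 : IsClosed {R : ℝ | R₀ ≤ R} := isClosed_le continuous_const continuous_id
    have h2 : IsClosed {R : ℝ | γ * (2*R) ≤ φ R} :=
      isClosed_le (by continuity) hφc
    exact h1.inter h2
  have hmem := hΓc.csSup_mem hΓne hΓbdd
  refine ⟨sSup Γ, ?_, hmem.2, ?_⟩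
  · exact lt_of_lt_of_le hR₀pos hmem.1
  · intro R' hR'
    by_contra hcon
    push_neg at hcon
    have : R' ∈ Γ := ⟨le_trans hmem.1 hR'.le, hcon⟩
    exact absurd (le_csSup hΓbdd this) (not_le.2 hR')

/-- The main covering argument. -/
theorem GW.key (h : GW ω K) {γ : ℝ} (hγ0 : 0 < γ) (hγ1 : γ < 1)
    (T : EReal) (E F : Set ℝ) (hEm : MeasurableSet E) (hFm : MeasurableSet F)
    (hEF : E ⊆ F) (hFT : F ⊆ {s : ℝ | (s : EReal) < T}) (hEfin : volume E < ⊤)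
    (hink : ∀ t : ℝ, (t : EReal) ≤ T → ∀ R > (0:ℝ),
      γ * (volume (Set.Ioo (t - R) (t + R))).toReal ≤
        (volume (Set.Ioo (t - R) (t + R) ∩ E)).toReal →
      Set.Ioo (t - R) (t + R) ∩ {s : ℝ | (s : EReal) ≤ T} ⊆ F) :
    nu ω E ≤ ENNReal.ofReal
      (((1 - Real.exp (-(4 * (Real.log K + 1))) / 2)⁻¹ * (40 * Real.exp (40 * (Real.log K + 1))))
        * γ ^ (Real.log (1 - Real.exp (-(4 * (Real.log K + 1))) / 2) / Real.log (1/8)))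
      * nu ω F := by
  classical
  set A : ℝ := Real.log K + 1 with hA
  have hA1 : 1 ≤ A := by
    have := Real.log_nonneg h.oneleK
    rw [hA]; linarith
  set β : ℝ := 1 - Real.exp (-(4 * A)) / 2 with hβ
  have hexp1 : Real.exp (-(4*A)) ≤ 1 := Real.exp_le_one_iff.2 (by linarith)
  have hβ0 : (0:ℝ) < β := by rw [hβ]; linarith [Real.exp_pos (-(4*A))]
  set δ : ℝ := Real.log β / Real.log (1/8) with hδ
  set P : ℝ → ℝ → Prop := fun x R => 0 < R ∧
      γ * (2*R) ≤ (volume (E ∩ Set.Ioo (x - R) (x + R))).toReal ∧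
      ∀ R' > R, (volume (E ∩ Set.Ioo (x - R') (x + R'))).toReal < γ * (2*R') with hP
  set Rf : ℝ → ℝ := fun x => if hx : ∃ R, P x R then hx.choose else 0 with hRf
  have hRf_spec : ∀ x, (∃ R, P x R) → P x (Rf x) := by
    intro x hx
    rw [hRf]
    simp only [dif_pos hx]
    exact hx.choose_spec
  set G : Set ℝ := {x ∈ E | ∃ R, P x R} with hG
  have hGvol : volume (E \ G) = 0 := by
    have hst := stopping E hEfin hγ0 hγ1
    rw [ae_iff] at hst
    rw [Measure.restrict_apply' hEm] at hst
    apply measure_mono_null _ hst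
    intro x hx
    exact ⟨fun hPx => hx.2 ⟨hx.1, hPx⟩, hx.1⟩
  have hRf_bdd : ∀ x ∈ G, Rf x ≤ (volume E).toReal / (2*γ) := by
    intro x hxG
    have hs := hRf_spec x hxG.2
    have h2 := hs.2.1
    have hle : (volume (E ∩ Set.Ioo (x - Rf x) (x + Rf x))).toReal ≤ (volume E).toReal :=
      ENNReal.toReal_mono (ne_of_lt hEfin) (measure_mono Set.inter_subset_left)
    rw [le_div_iff₀ (by positivity)]
    nlinarith
  obtain ⟨u, huG, hudisj, hucov⟩ :=
    Vitali.exists_disjoint_subfamily_covering_enlargement_closedBall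
      G id Rf ((volume E).toReal / (2*γ)) hRf_bdd 4 (by norm_num)
  have hupos : ∀ y ∈ u, 0 < Rf y := fun y hy => (hRf_spec y (huG hy).2).1
  have hucount : u.Countable := by
    apply hudisj.countable_of_nonempty_interior
    intro y hy
    simp only [id_eq]
    rw [interior_closedBall _ (ne_of_gt (hupos y hy))]
    exact Metric.nonempty_ball.2 (hupos y hy)
  have hGcov : G ⊆ ⋃ y ∈ u, Metric.closedBall y (4 * Rf y) := by
    intro x hxG
    obtain ⟨y, hyu, hsub⟩ := hucov x hxG
    exact Set.mem_biUnion hyu (hsub (Metric.mem_closedBall_self (hRf_spec x hxG.2).1.le))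
  -- per-ball estimate
  have perball : ∀ y ∈ u, nu ω (E ∩ Metric.closedBall y (4 * Rf y))
      ≤ ENNReal.ofReal ((β⁻¹ * (40 * Real.exp (40 * A))) * γ ^ δ)
        * nu ω (Set.Ico (y - Rf y/2) y) := by
    intro y hyu
    have hyE : y ∈ E := (huG hyu).1
    have hs := hRf_spec y (huG hyu).2
    set R := Rf y with hR
    have hR0 : 0 < R := hs.1
    -- smallness at scale 4R
    have hsmall : (volume (E ∩ Set.Ico (y - 4*R) (y + 4*R))).toReal
        ≤ γ * ((y + 4*R) - (y - 4*R)) := by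
      have h4 := hs.2.2 (4*R) (by linarith)
      rw [vol_inter_Ico_eq_Ioo]
      have he : γ * (2*(4*R)) = γ * ((y + 4*R) - (y - 4*R)) := by ring
      linarith [h4]
    have hW := h.W (show y - 4*R < y + 4*R by linarith) hγ0 hγ1.le
      (hEm.inter measurableSet_Ico) Set.inter_subset_right hsmall
    -- doubling in nu form
    have hdb := h.doubling (show y - 4*R ≤ y - R/2 by linarith)
      (show y - R/2 < y by linarith) (show (y:ℝ) ≤ y + 4*R by linarith)
      (show (y + 4*R) - (y - 4*R) ≤ 20 * (y - (y - R/2)) by ring_nf; linarith)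
    have hdbν : nu ω (Set.Ico (y - 4*R) (y + 4*R))
        ≤ ENNReal.ofReal (40 * Real.exp (40 * A)) * nu ω (Set.Ico (y - R/2) y) := by
      rw [h.nu_eq measurableSet_Ico (le_refl _), h.nu_eq measurableSet_Ico (le_refl _),
        ← ENNReal.ofReal_mul (by positivity)]
      apply ENNReal.ofReal_le_ofReal
      have hid : (40 * Real.exp (40*A)) * (Real.exp (-(40*A))/40) = 1 := by
        rw [Real.exp_neg]
        field_simp
      calc ∫ x in Set.Ico (y - 4*R) (y + 4*R), ω x
          = (40 * Real.exp (40*A)) * (Real.exp (-(40*A))/40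
              * ∫ x in Set.Ico (y - 4*R) (y + 4*R), ω x) := by
            rw [← mul_assoc, hid, one_mul]
        _ ≤ (40 * Real.exp (40*A)) * ∫ x in Set.Ico (y - R/2) y, ω x := by
            apply mul_le_mul_of_nonneg_left _ (by positivity)
            have hA40 : Real.exp (-(40 * (Real.log K + 1))) / 40
                * ∫ x in Set.Ico (y - 4*R) (y + 4*R), ω x
                ≤ ∫ x in Set.Ico (y - R/2) y, ω x := hdb
            rw [← hA] at hA40
            linarith
    -- inclusion into F
    have hIF : Set.Ico (y - R/2) y ⊆ F := by
      have hyT : (y : EReal) < T := hFT (hEF hyE)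
      have htrig : γ * (volume (Set.Ioo (y - R) (y + R))).toReal
          ≤ (volume (Set.Ioo (y - R) (y + R) ∩ E)).toReal := by
        rw [Set.inter_comm, Real.volume_Ioo]
        have he : (y + R) - (y - R) = 2*R := by ring
        rw [he, ENNReal.toReal_ofReal (by linarith)]
        exact hs.2.1
      have hsubF := hink y (le_of_lt hyT) R hR0 htrig
      intro s hs'
      apply hsubF
      refine ⟨⟨by linarith [hs'.1], by linarith [hs'.2]⟩, ?_⟩
      have hlt : (s : EReal) < (y : EReal) := EReal.coe_lt_coe_iff.2 hs'.2
      exact le_of_lt (lt_trans hlt hyT)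
    -- assembling
    have hcb : nu ω (E ∩ Metric.closedBall y (4*R))
        ≤ nu ω (E ∩ Set.Ico (y - 4*R) (y + 4*R)) := by
      have hstep : nu ω (E ∩ Metric.closedBall y (4*R))
          ≤ nu ω (E ∩ Set.Ico (y - 4*R) (y + 4*R)) + nu ω {y + 4*R} := by
        rw [Real.closedBall_eq_Icc]
        refine le_trans (measure_mono ?_) (measure_union_le _ _)
        rintro s ⟨hsE, hs1, hs2⟩
        rcases eq_or_lt_of_le hs2 with heq | hlt
        · exact Or.inr heq
        · exact Or.inl ⟨hsE, hs1, hlt⟩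
      rwa [nu_null ω (Real.volume_singleton), add_zero] at hstep
    calc nu ω (E ∩ Metric.closedBall y (4*R))
        ≤ nu ω (E ∩ Set.Ico (y - 4*R) (y + 4*R)) := hcb
      _ ≤ ENNReal.ofReal (β⁻¹ * γ ^ δ) * nu ω (Set.Ico (y - 4*R) (y + 4*R)) := hW
      _ ≤ ENNReal.ofReal (β⁻¹ * γ ^ δ)
            * (ENNReal.ofReal (40 * Real.exp (40 * A)) * nu ω (Set.Ico (y - R/2) y)) :=
          mul_le_mul_right hdbν _
      _ = ENNReal.ofReal ((β⁻¹ * (40 * Real.exp (40 * A))) * γ ^ δ)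
            * nu ω (Set.Ico (y - R/2) y) := by
          rw [← mul_assoc, ← ENNReal.ofReal_mul (by positivity)]
          congr 2
          ring
  -- the half-intervals are disjoint and inside F
  have hJsub : ∀ y ∈ u, Set.Ico (y - Rf y/2) y ⊆ Metric.closedBall y (Rf y) := by
    intro y hy s hs'
    rw [Metric.mem_closedBall, Real.dist_eq, abs_le]
    have h1 := hs'.1
    have h2 := hs'.2
    have := hupos y hy
    constructor <;> linarith
  have hJdisj : u.PairwiseDisjoint (fun y => Set.Ico (y - Rf y/2) y) := by
    intro y hy z hz hyz
    exact (hudisj hy hz hyz).mono (hJsub y hy) (hJsub z hz)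
  have hJF : (⋃ y ∈ u, Set.Ico (y - Rf y/2) y) ⊆ F := by
    apply Set.iUnion₂_subset
    intro y hy
    intro s hs'
    -- recompute inclusion into F (as in perball)
    have hyE : y ∈ E := (huG hy).1
    have hsy := hRf_spec y (huG hy).2
    have hyT : (y : EReal) < T := hFT (hEF hyE)
    have htrig : γ * (volume (Set.Ioo (y - Rf y) (y + Rf y))).toReal
        ≤ (volume (Set.Ioo (y - Rf y) (y + Rf y) ∩ E)).toReal := by
      rw [Set.inter_comm, Real.volume_Ioo]
      have he : (y + Rf y) - (y - Rf y) = 2*(Rf y) := by ring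
      rw [he, ENNReal.toReal_ofReal (by linarith [hsy.1])]
      exact hsy.2.1
    have hsubF := hink y (le_of_lt hyT) (Rf y) hsy.1 htrig
    apply hsubF
    refine ⟨⟨by linarith [hs'.1, hsy.1], by linarith [hs'.2, hsy.1]⟩, ?_⟩
    have hlt : (s : EReal) < (y : EReal) := EReal.coe_lt_coe_iff.2 hs'.2
    exact le_of_lt (lt_trans hlt hyT)
  -- summation
  have hEsplit : nu ω E ≤ nu ω (E ∩ G) := by
    have hle : nu ω E ≤ nu ω (E ∩ G) + nu ω (E \ G) := by
      refine le_trans (measure_mono ?_) (measure_union_le _ _)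
      intro x hx
      by_cases hxG : x ∈ G
      · exact Or.inl ⟨hx, hxG⟩
      · exact Or.inr ⟨hx, hxG⟩
    rwa [nu_null ω hGvol, add_zero] at hle
  calc nu ω E ≤ nu ω (E ∩ G) := hEsplit
    _ ≤ nu ω (⋃ y ∈ u, E ∩ Metric.closedBall y (4 * Rf y)) := by
        apply measure_mono
        intro x hx
        obtain ⟨y, hyu, hxy⟩ := Set.mem_iUnion₂.1 (hGcov hx.2)
        exact Set.mem_iUnion₂.2 ⟨y, hyu, hx.1, hxy⟩
    _ ≤ ∑' y : u, nu ω (E ∩ Metric.closedBall y (4 * Rf y)) :=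
        measure_biUnion_le _ hucount _
    _ ≤ ∑' y : u, ENNReal.ofReal ((β⁻¹ * (40 * Real.exp (40 * A))) * γ ^ δ)
          * nu ω (Set.Ico ((y:ℝ) - Rf y/2) y) :=
        ENNReal.tsum_le_tsum (fun y => perball y y.2)
    _ = ENNReal.ofReal ((β⁻¹ * (40 * Real.exp (40 * A))) * γ ^ δ)
          * ∑' y : u, nu ω (Set.Ico ((y:ℝ) - Rf y/2) y) := ENNReal.tsum_mul_left
    _ = ENNReal.ofReal ((β⁻¹ * (40 * Real.exp (40 * A))) * γ ^ δ)
          * nu ω (⋃ y ∈ u, Set.Ico ((y:ℝ) - Rf y/2) y) := by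
        rw [measure_biUnion hucount hJdisj (fun y _ => measurableSet_Ico)]
    _ ≤ ENNReal.ofReal ((β⁻¹ * (40 * Real.exp (40 * A))) * γ ^ δ) * nu ω F :=
        mul_le_mul_right (measure_mono hJF) _

/-! ### From the `A_p` hypothesis to the Hruščëv inequality -/

theorem abs_log_le {w p : ℝ} (hw : 0 < w) (hp : 1 < p) :
    |Real.log w| ≤ w + (p - 1) * w ^ (1/(1-p)) := by
  have hσpos : 0 < w ^ (1/(1-p)) := Real.rpow_pos_of_pos hw _
  rcases le_or_gt 1 w with h1 | h1
  · rw [abs_of_nonneg (Real.log_nonneg h1)]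
    have hll : Real.log w ≤ w - 1 := Real.log_le_sub_one_of_pos hw
    nlinarith [mul_pos (sub_pos.2 hp) hσpos]
  · rw [abs_of_neg (Real.log_neg hw h1)]
    have hlogrpow : Real.log (w ^ (1/(1-p))) = (1/(1-p)) * Real.log w := Real.log_rpow hw _
    have hlog2 : Real.log (w ^ (1/(1-p))) ≤ w ^ (1/(1-p)) :=
      le_trans (Real.log_le_sub_one_of_pos hσpos) (by linarith)
    have hkey : -Real.log w = (p-1) * ((1/(1-p)) * Real.log w) := by
      have h1p : (1:ℝ) - p ≠ 0 := by linarith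
      field_simp
      ring
    rw [hkey]
    calc (p-1) * ((1/(1-p)) * Real.log w) = (p-1) * Real.log (w ^ (1/(1-p))) := by
          rw [hlogrpow]
      _ ≤ (p-1) * (w ^ (1/(1-p))) := mul_le_mul_of_nonneg_left hlog2 (by linarith)
      _ ≤ w + (p-1) * w ^ (1/(1-p)) := by linarith

theorem hru_of_Ap {ω : ℝ → ℝ} {p K₀ : ℝ} (hp : 1 < p) (hK₀ : 0 < K₀)
    (hpos : ∀ x, 0 < ω x)
    (hintlog : ∀ a b : ℝ, IntegrableOn (fun x => Real.log (ω x)) (Set.Ico a b))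
    (hintσ : ∀ a b : ℝ, IntegrableOn (fun x => ω x ^ (1/(1-p))) (Set.Ico a b))
    (hAp : ∀ t : ℝ, ∀ r > (0:ℝ),
      ((1 / r) * ∫ s in Set.Ioo (t - r) t, ω s) *
        ((1 / r) * ∫ s in Set.Ioo (t - r) t, ω s ^ (1 / (1 - p))) ^ (p - 1) ≤ K₀) :
    ∀ a b : ℝ, a < b → (b - a)⁻¹ * ∫ s in Set.Ico a b, ω s ≤
      (max K₀ 1) * Real.exp ((b - a)⁻¹ * ∫ s in Set.Ico a b, Real.log (ω s)) := by
  intro a b hab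
  set r : ℝ := b - a with hr
  have hr0 : 0 < r := sub_pos.2 hab
  set μ : Measure ℝ := volume.restrict (Set.Ioo a b) with hμ
  haveI hfinμ : IsFiniteMeasure μ := ⟨by
    rw [hμ, Measure.restrict_apply_univ]
    exact measure_Ioo_lt_top⟩
  haveI hnz : NeZero μ := ⟨by
    rw [hμ, Ne, Measure.restrict_eq_zero, Real.volume_Ioo]
    simp only [ENNReal.ofReal_eq_zero, not_le]
    linarith⟩
  have hμuniv : (μ Set.univ).toReal = r := by
    rw [hμ, Measure.restrict_apply_univ, Real.volume_Ioo, ENNReal.toReal_ofReal hr0.le, hr]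
  set f : ℝ → ℝ := fun x => (1/(1-p)) * Real.log (ω x) with hf
  have hfi : Integrable f μ := by
    rw [hμ, hf]
    exact (((hintlog a b).mono_set Set.Ioo_subset_Ico_self).const_mul _)
  have hfe : (fun x => Real.exp (f x)) = fun x => ω x ^ (1/(1-p)) := by
    funext x
    rw [hf]
    rw [Real.rpow_def_of_pos (hpos x), mul_comm]
  have hgi : Integrable (fun x => Real.exp (f x)) μ := by
    rw [hfe, hμ]
    exact (hintσ a b).mono_set Set.Ioo_subset_Ico_self
  have hjen := convexOn_exp.map_average_le Real.continuous_exp.continuousOn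
    isClosed_univ (Filter.Eventually.of_forall fun x => Set.mem_univ (f x)) hfi hgi
  rw [average_eq, average_eq, measureReal_def, hμuniv] at hjen
  simp only [smul_eq_mul] at hjen
  -- rewrite averages
  have havg : ∫ x, f x ∂μ = (1/(1-p)) * ∫ x in Set.Ioo a b, Real.log (ω x) := by
    rw [hμ, hf, integral_const_mul]
  have havg2 : ∫ x, Real.exp (f x) ∂μ = ∫ x in Set.Ioo a b, ω x ^ (1/(1-p)) := by
    rw [hfe, hμ]
  rw [havg, havg2] at hjen
  set M : ℝ := r⁻¹ * ∫ x in Set.Ioo a b, Real.log (ω x) with hM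
  set X : ℝ := r⁻¹ * ∫ x in Set.Ioo a b, ω x ^ (1/(1-p)) with hX
  have hXE : Real.exp ((1/(1-p)) * M) ≤ X := by
    rw [hM, hX]
    calc Real.exp ((1/(1-p)) * (r⁻¹ * ∫ x in Set.Ioo a b, Real.log (ω x)))
        = Real.exp (r⁻¹ * ((1/(1-p)) * ∫ x in Set.Ioo a b, Real.log (ω x))) := by
          ring_nf
      _ ≤ r⁻¹ * ∫ x in Set.Ioo a b, ω x ^ (1/(1-p)) := hjen
  -- the Ap hypothesis at (b, r)
  have hAp' := hAp b r hr0
  have hba : b - r = a := by rw [hr]; ring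
  rw [hba] at hAp'
  set c1 : ℝ := (1/r) * ∫ s in Set.Ioo a b, ω s with hc1
  have hc1nn : 0 ≤ c1 := by
    rw [hc1]
    apply mul_nonneg (by positivity)
    exact setIntegral_nonneg_of_ae (Filter.Eventually.of_forall fun x => (hpos x).le)
  have hXeq : (1/r) * ∫ s in Set.Ioo a b, ω s ^ (1/(1-p)) = X := by
    rw [hX, one_div]
  rw [hXeq] at hAp'
  have hE0 : (0:ℝ) < Real.exp ((1/(1-p)) * M) := Real.exp_pos _
  have hXp : Real.exp (-M) ≤ X ^ (p-1) := by
    have hrp := Real.rpow_le_rpow hE0.le hXE (by linarith : (0:ℝ) ≤ p - 1)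
    have hEp : Real.exp ((1/(1-p)) * M) ^ (p-1) = Real.exp (-M) := by
      rw [← Real.exp_mul]
      congr 1
      have h1p : (1:ℝ) - p ≠ 0 := by linarith
      field_simp
      ring
    rwa [hEp] at hrp
  have hchain : c1 * Real.exp (-M) ≤ K₀ :=
    le_trans (mul_le_mul_of_nonneg_left hXp hc1nn) hAp'
  have hfinal : c1 ≤ K₀ * Real.exp M := by
    have := (le_div_iff₀ (Real.exp_pos (-M))).2 hchain
    rwa [Real.exp_neg, div_inv_eq_mul] at this
  have hmax : c1 ≤ (max K₀ 1) * Real.exp M := by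
    calc c1 ≤ K₀ * Real.exp M := hfinal
      _ ≤ (max K₀ 1) * Real.exp M :=
        mul_le_mul_of_nonneg_right (le_max_left _ _) (Real.exp_pos M).le
  rw [hc1, hM] at hmax
  rw [integral_Ico_eq_integral_Ioo, integral_Ico_eq_integral_Ioo]
  calc (b - a)⁻¹ * ∫ s in Set.Ioo a b, ω s
      = (1/r) * ∫ s in Set.Ioo a b, ω s := by rw [hr, one_div]
    _ ≤ (max K₀ 1) * Real.exp (r⁻¹ * ∫ x in Set.Ioo a b, Real.log (ω x)) := hmax
    _ = (max K₀ 1) * Real.exp ((b - a)⁻¹ * ∫ s in Set.Ioo a b, Real.log (ω s)) := by rw [hr]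

end InkSpots

open InkSpots

/-- Weighted "crawling of ink spots" lemma on the real line for `A_p`
weights with characteristic bounded by `K₀`. -/
theorem stmt8 (K₀ : ℝ) (hK₀ : 0 < K₀) :
    ∃ N δ : ℝ, 0 < N ∧ 0 < δ ∧ δ < 1 ∧
      ∀ p : ℝ, 1 < p →
      ∀ ω : ℝ → ℝ, (∀ s, 0 < ω s) → LocallyIntegrable ω →
        LocallyIntegrable (fun s => ω s ^ (1 / (1 - p))) →
        (∀ t : ℝ, ∀ r > (0 : ℝ),
          ((1 / r) * ∫ s in Set.Ioo (t - r) t, ω s) *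
            ((1 / r) * ∫ s in Set.Ioo (t - r) t, ω s ^ (1 / (1 - p))) ^ (p - 1) ≤ K₀) →
      ∀ T : EReal, ∀ γ : ℝ, γ ∈ Set.Ioo (0 : ℝ) 1 →
      ∀ E F : Set ℝ, MeasurableSet E → MeasurableSet F → E ⊆ F →
        F ⊆ {s : ℝ | (s : EReal) < T} →
        volume E < ⊤ →
        (∀ t : ℝ, (t : EReal) ≤ T → ∀ R > (0 : ℝ),
          γ * (volume (Set.Ioo (t - R) (t + R))).toReal ≤
            (volume (Set.Ioo (t - R) (t + R) ∩ E)).toReal →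
          Set.Ioo (t - R) (t + R) ∩ {s : ℝ | (s : EReal) ≤ T} ⊆ F) →
        ∫⁻ s in E, ENNReal.ofReal (ω s) ≤
          ENNReal.ofReal (N * γ ^ δ) * ∫⁻ s in F, ENNReal.ofReal (ω s) := by
  classical
  set K : ℝ := max K₀ 1 with hK
  have hK1 : (1:ℝ) ≤ K := le_max_right _ _
  set A : ℝ := Real.log K + 1 with hA
  have hA1 : 1 ≤ A := by
    have := Real.log_nonneg hK1
    rw [hA]; linarith
  set β : ℝ := 1 - Real.exp (-(4 * A)) / 2 with hβ
  have hexp1 : Real.exp (-(4*A)) ≤ 1 := Real.exp_le_one_iff.2 (by linarith)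
  have hβhalf : (1:ℝ)/2 ≤ β := by rw [hβ]; linarith
  have hβ0 : (0:ℝ) < β := lt_of_lt_of_le (by norm_num) hβhalf
  have hβ1 : β < 1 := by rw [hβ]; linarith [Real.exp_pos (-(4*A))]
  set δ : ℝ := Real.log β / Real.log (1/8) with hδ
  have hρneg : Real.log (1/8:ℝ) < 0 := Real.log_neg (by norm_num) (by norm_num)
  have hβneg : Real.log β < 0 := Real.log_neg hβ0 hβ1
  have hδ0 : 0 < δ := div_pos_iff.2 (Or.inr ⟨hβneg, hρneg⟩)
  have hδ1 : δ < 1 := by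
    have hnum : Real.log (1/8 : ℝ) < Real.log β := Real.log_lt_log (by norm_num) (by linarith)
    have heq : δ - 1 = (Real.log β - Real.log (1/8)) / Real.log (1/8) := by
      rw [hδ]; field_simp
    have hlt : (Real.log β - Real.log (1/8)) / Real.log (1/8) < 0 :=
      div_neg_of_pos_of_neg (by linarith) hρneg
    linarith
  set N : ℝ := β⁻¹ * (40 * Real.exp (40 * A)) with hN
  have hN0 : 0 < N := by rw [hN]; positivity
  refine ⟨N, δ, hN0, hδ0, hδ1, ?_⟩
  intro p hp ω hω hωloc hσloc hAp T γ hγ E F hEm hFm hEF hFT hEfin hink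
  obtain ⟨hγ0, hγ1⟩ := hγ
  -- a measurable, everywhere positive representative of ω
  have haes : AEStronglyMeasurable ω volume := hωloc.aestronglyMeasurable
  have hae : AEMeasurable ω volume := haes.aemeasurable
  set g : ℝ → ℝ := hae.mk ω with hg
  have hgmeas : Measurable g := hae.measurable_mk
  have hgae : ω =ᵐ[volume] g := hae.ae_eq_mk
  set ω' : ℝ → ℝ := fun x => if 0 < g x then g x else 1 with hω'
  have hω'meas : Measurable ω' :=
    Measurable.ite (measurableSet_lt measurable_const hgmeas) hgmeas measurable_const
  have hω'pos : ∀ x, 0 < ω' x := by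
    intro x
    rw [hω']
    dsimp only
    split
    · assumption
    · exact zero_lt_one
  have hω'ae : ω =ᵐ[volume] ω' := by
    filter_upwards [hgae] with x hx
    rw [hω']
    dsimp only
    rw [← hx, if_pos (hω x)]
  have hσae : (fun x => ω x ^ (1/(1-p))) =ᵐ[volume] (fun x => ω' x ^ (1/(1-p))) := by
    filter_upwards [hω'ae] with x hx
    rw [hx]
  -- integrability on bounded intervals
  have hint : ∀ a b : ℝ, IntegrableOn ω' (Set.Ico a b) := by
    intro a b
    have h1 : IntegrableOn ω (Set.Ico a b) :=
      (hωloc.integrableOn_isCompact isCompact_Icc).mono_set Set.Ico_subset_Icc_self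
    exact h1.congr (ae_restrict_of_ae hω'ae)
  have hintσ : ∀ a b : ℝ, IntegrableOn (fun x => ω' x ^ (1/(1-p))) (Set.Ico a b) := by
    intro a b
    have h1 : IntegrableOn (fun x => ω x ^ (1/(1-p))) (Set.Ico a b) :=
      (hσloc.integrableOn_isCompact isCompact_Icc).mono_set Set.Ico_subset_Icc_self
    exact h1.congr (ae_restrict_of_ae hσae)
  have hintlog : ∀ a b : ℝ, IntegrableOn (fun x => Real.log (ω' x)) (Set.Ico a b) := by
    intro a b
    apply Integrable.mono' (g := fun x => ω' x + (p-1) * (ω' x ^ (1/(1-p))))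
    · exact (hint a b).add ((hintσ a b).const_mul (p-1))
    · exact (Real.measurable_log.comp hω'meas).aestronglyMeasurable
    · apply Filter.Eventually.of_forall
      intro x
      rw [Real.norm_eq_abs]
      exact abs_log_le (hω'pos x) hp
  -- the Ap hypothesis transfers to ω'
  have hAp' : ∀ t : ℝ, ∀ r > (0:ℝ),
      ((1 / r) * ∫ s in Set.Ioo (t - r) t, ω' s) *
        ((1 / r) * ∫ s in Set.Ioo (t - r) t, ω' s ^ (1 / (1 - p))) ^ (p - 1) ≤ K₀ := by
    intro t r hr
    have h1 : ∫ s in Set.Ioo (t - r) t, ω' s = ∫ s in Set.Ioo (t - r) t, ω s :=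
      integral_congr_ae (ae_restrict_of_ae hω'ae.symm)
    have h2 : ∫ s in Set.Ioo (t - r) t, ω' s ^ (1/(1-p))
        = ∫ s in Set.Ioo (t - r) t, ω s ^ (1/(1-p)) :=
      integral_congr_ae (ae_restrict_of_ae hσae.symm)
    rw [h1, h2]
    exact hAp t r hr
  have hgw : GW ω' K :=
    ⟨hω'meas, hω'pos, hint, hintlog, hK1,
      hru_of_Ap hp hK₀ hω'pos hintlog hintσ hAp'⟩
  have hkey := hgw.key hγ0 hγ1 T E F hEm hFm hEF hFT hEfin hink
  have hgoalE : ∫⁻ s in E, ENNReal.ofReal (ω s) = nu ω' E := by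
    rw [nu_apply _ hEm]
    apply lintegral_congr_ae
    filter_upwards [ae_restrict_of_ae hω'ae] with x hx
    rw [hx]
  have hgoalF : ∫⁻ s in F, ENNReal.ofReal (ω s) = nu ω' F := by
    rw [nu_apply _ hFm]
    apply lintegral_congr_ae
    filter_upwards [ae_restrict_of_ae hω'ae] with x hx
    rw [hx]
  rw [hgoalE, hgoalF]
  exact hkey
end

section
/- With the change of variables $y$ of the previous statement and $\tilde a_{kl} := \sum_{i,j=1}^d \frac{a_{ij}+a_{ji}}{2}\frac{\partial y_k}{\partial x_i}\frac{\partial y_l}{\partial x_j}$, one has $\tilde a_{dd}=a_{dd}$, $\tilde a_{dl}=\tilde a_{kd}=0$ for $k,l\in\{1,\dots,d-1\}$, and there exists $\tilde\nu>0$ depending only on $\nu$ and $d$ such that $\tilde a_{kl}\xi_k\xi_l \geq \tilde\nu|\xi|^2$ for all $\xi\in\mathbb{R}^d$. -/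
/-- Properties of the transformed coefficients
`ã_{kl} = ∑_{ij} (a_{ij}+a_{ji})/2 ⬝ ∂y_k/∂x_i ⬝ ∂y_l/∂x_j`:
`ã_{dd} = a_{dd}`, `ã_{dl} = ã_{kd} = 0` for `k,l < d`, and uniform
ellipticity with a constant `ν'` depending only on `ν` and `d`. -/
theorem stmt13 (n : ℕ) (hn : 1 ≤ n) (ν : ℝ) (hν : 0 < ν) :
    ∃ ν' : ℝ, 0 < ν' ∧
      ∀ a : Fin (n + 1) → Fin (n + 1) → ℝ,
        (∀ ξ : Fin (n + 1) → ℝ,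
          ν * ∑ i, ξ i ^ 2 ≤ ∑ i, ∑ j, a i j * ξ i * ξ j) →
        (∀ i j, |a i j| ≤ ν⁻¹) →
        let P : Fin (n + 1) → Fin (n + 1) → ℝ := fun k i =>
          if k = i then 1
          else if i = Fin.last n then
            -((a k (Fin.last n) + a (Fin.last n) k) /
              (2 * a (Fin.last n) (Fin.last n)))
          else 0
        let ta : Fin (n + 1) → Fin (n + 1) → ℝ := fun k l =>
          ∑ i, ∑ j, (a i j + a j i) / 2 * P k i * P l j
        ta (Fin.last n) (Fin.last n) = a (Fin.last n) (Fin.last n) ∧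
        (∀ k, k ≠ Fin.last n → ta (Fin.last n) k = 0 ∧ ta k (Fin.last n) = 0) ∧
        ∀ ξ : Fin (n + 1) → ℝ,
          ν' * ∑ i, ξ i ^ 2 ≤ ∑ k, ∑ l, ta k l * ξ k * ξ l := by
  set M : ℝ := ν⁻¹ * ν⁻¹ + 1 with hM
  have hM1 : 1 ≤ M := by
    have h : 0 < ν⁻¹ * ν⁻¹ := by positivity
    rw [hM]; linarith
  set C : ℝ := 1 + (n + 1) * M ^ 2 with hC
  have hC0 : 0 < C := by positivity
  refine ⟨ν / C, by positivity, ?_⟩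
  intro a hell habs
  set d : Fin (n + 1) := Fin.last n with hd
  intro P ta
  set s : Fin (n + 1) → Fin (n + 1) → ℝ := fun i j => (a i j + a j i) / 2 with hs
  have hadd : ν ≤ a d d := by
    have := hell (fun i => if i = d then 1 else 0)
    simpa [Finset.sum_ite_eq', mul_ite, ite_mul] using this
  have haddpos : 0 < a d d := lt_of_lt_of_le hν hadd
  have haddne : a d d ≠ 0 := ne_of_gt haddpos
  set c : Fin (n + 1) → ℝ := fun k =>
    if k = d then 0 else -((a k d + a d k) / (2 * a d d)) with hc
  have hP : ∀ k j, P k j = (if j = k then 1 else 0) + (if j = d then c k else 0) := by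
    intro k j
    by_cases h1 : k = j <;> by_cases h2 : j = d <;>
      simp [P, c, h1, h2, eq_comm] <;> simp_all
  have hta : ∀ k l, ta k l =
      s k l + s k d * c l + s d l * c k + s d d * (c k * c l) := by
    intro k l
    show (∑ i, ∑ j, s i j * P k i * P l j) = _
    simp only [hP]
    have key : ∀ i j, s i j * ((if i = k then 1 else 0) + (if i = d then c k else 0)) *
        ((if j = l then 1 else 0) + (if j = d then c l else 0)) =
        (if j = l then (if i = k then s i j else 0) + (if i = d then s i j * c k else 0) else 0)
        + (if j = d then (if i = k then s i j * c l else 0) +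
            (if i = d then s i j * (c k * c l) else 0) else 0) := by
      intro i j
      split_ifs <;> first | ring | simp_all <;> ring
    simp only [key, Finset.sum_add_distrib, Finset.sum_ite_eq', Finset.mem_univ, if_true]
    ring
  have hcd : c d = 0 := by simp [c]
  have hsd : s d d = a d d := by simp [s]
  refine ⟨?_, ?_, ?_⟩
  · rw [hta, hcd, hsd]; ring
  · intro k hk
    have hck : c k = -((a k d + a d k) / (2 * a d d)) := by simp [c, hk]
    refine ⟨?_, ?_⟩ <;>
      · rw [hta, hcd, hck, hsd]
        simp only [hs]
        field_simp
        ring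
  · intro ξ
    set σ : ℝ := ∑ k, ξ k * c k with hσ
    set η : Fin (n + 1) → ℝ := fun i => ξ i + (if i = d then σ else 0) with hη
    have key : ∀ f : Fin (n + 1) → ℝ, ∑ i, f i * η i = (∑ i, f i * ξ i) + f d * σ := by
      intro f
      simp only [hη, mul_add, Finset.sum_add_distrib, mul_ite, mul_zero,
        Finset.sum_ite_eq', Finset.mem_univ, if_true]
    have hL : ∑ k, ∑ l, ta k l * ξ k * ξ l =
        (∑ k, ∑ l, s k l * ξ k * ξ l) + (∑ k, s k d * ξ k) * σ
          + (∑ l, s d l * ξ l) * σ + s d d * (σ * σ) := by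
      have inner : ∀ k, ∑ l, ta k l * ξ k * ξ l =
          (∑ l, s k l * ξ k * ξ l) + (s k d * ξ k) * σ
            + (ξ k * c k) * (∑ l, s d l * ξ l) + (s d d * (ξ k * c k)) * σ := by
        intro k
        calc ∑ l, ta k l * ξ k * ξ l
            = ∑ l, (s k l * ξ k * ξ l + (s k d * ξ k) * (ξ l * c l)
               + (ξ k * c k) * (s d l * ξ l) + (s d d * (ξ k * c k)) * (ξ l * c l)) :=
              Finset.sum_congr rfl fun l _ => by rw [hta]; ring
          _ = _ := by
              rw [hσ]
              simp only [Finset.sum_add_distrib, ← Finset.mul_sum]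
      rw [Finset.sum_congr rfl fun k _ => inner k]
      rw [hσ]
      simp only [Finset.sum_add_distrib, ← Finset.sum_mul, ← Finset.mul_sum]
      ring
    have hR : ∑ i, ∑ j, s i j * η i * η j =
        (∑ k, ∑ l, s k l * ξ k * ξ l) + (∑ k, s k d * ξ k) * σ
          + (∑ l, s d l * ξ l) * σ + s d d * (σ * σ) := by
      have inner : ∀ i, ∑ j, s i j * η i * η j
          = (∑ j, (s i j * ξ j) * η i) + (s i d * σ) * η i := by
        intro i
        calc ∑ j, s i j * η i * η j
            = ∑ j, (s i j * η i) * η j := Finset.sum_congr rfl fun j _ => by ring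
          _ = (∑ j, (s i j * η i) * ξ j) + (s i d * η i) * σ := key _
          _ = (∑ j, (s i j * ξ j) * η i) + (s i d * σ) * η i := by
              rw [Finset.sum_congr rfl fun j (_ : j ∈ Finset.univ) =>
                (by ring : (s i j * η i) * ξ j = (s i j * ξ j) * η i)]
              ring
      rw [Finset.sum_congr rfl fun i _ => inner i, Finset.sum_add_distrib]
      have hA : ∑ i, ∑ j, (s i j * ξ j) * η i
          = (∑ k, ∑ l, s k l * ξ k * ξ l) + (∑ l, s d l * ξ l) * σ := by
        rw [Finset.sum_comm]
        calc ∑ j, ∑ i, (s i j * ξ j) * η i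
            = ∑ j, ((∑ i, (s i j * ξ j) * ξ i) + (s d j * ξ j) * σ) :=
              Finset.sum_congr rfl fun j _ => key _
          _ = (∑ j, ∑ i, (s i j * ξ j) * ξ i) + (∑ j, s d j * ξ j) * σ := by
              rw [Finset.sum_add_distrib, ← Finset.sum_mul]
          _ = _ := by
              congr 1
              rw [Finset.sum_comm]
              exact Finset.sum_congr rfl fun k _ => Finset.sum_congr rfl fun l _ => by ring
      have hB : ∑ i, (s i d * σ) * η i
          = (∑ k, s k d * ξ k) * σ + s d d * (σ * σ) := by
        rw [key]
        rw [Finset.sum_congr rfl fun i (_ : i ∈ Finset.univ) =>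
          (by ring : (s i d * σ) * ξ i = (s i d * ξ i) * σ), ← Finset.sum_mul]
        ring
      rw [hA, hB]
      ring
    have hquad : ∑ k, ∑ l, ta k l * ξ k * ξ l = ∑ i, ∑ j, s i j * η i * η j := by
      rw [hL, hR]
    have hsym : ∑ i, ∑ j, s i j * η i * η j = ∑ i, ∑ j, a i j * η i * η j := by
      have swap : ∑ i, ∑ j, a j i * η i * η j = ∑ i, ∑ j, a i j * η i * η j := by
        rw [Finset.sum_comm]
        exact Finset.sum_congr rfl fun i _ => Finset.sum_congr rfl fun j _ => by ring
      have expand : ∀ i j, s i j * η i * η j =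
          (a i j * η i * η j) / 2 + (a j i * η i * η j) / 2 := fun i j => by
        simp only [hs]; ring
      simp only [expand, Finset.sum_add_distrib, ← Finset.sum_div]
      rw [swap]; ring
    have hcb : ∀ k, |c k| ≤ M := by
      intro k
      by_cases hk : k = d
      · simp only [hk, hcd, abs_zero]; linarith
      · simp only [hc, hk, if_false, abs_neg, abs_div]
        have h1 : |a k d + a d k| ≤ ν⁻¹ + ν⁻¹ := (abs_add_le _ _).trans (by
          gcongr <;> exact habs _ _)
        have h2 : (2 : ℝ) * ν ≤ |2 * a d d| := by
          rw [abs_of_pos (by positivity)]; linarith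
        calc |a k d + a d k| / |2 * a d d| ≤ (ν⁻¹ + ν⁻¹) / (2 * ν) :=
              div_le_div₀ (by positivity) h1 (by positivity) h2
          _ = ν⁻¹ * ν⁻¹ := by field_simp; ring
          _ ≤ M := by rw [hM]; linarith
    have hξd : ξ d = ∑ k, η k * ((if k = d then 1 else 0) - c k) := by
      have e : ∀ k, η k * ((if k = d then 1 else 0) - c k) =
          (if k = d then η k else 0) - ξ k * c k - (if k = d then σ * c k else 0) := by
        intro k
        by_cases hk : k = d <;> simp [hk, hη, hcd] <;> ring
      simp only [e, Finset.sum_sub_distrib, Finset.sum_ite_eq', Finset.mem_univ, if_true,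
        ← hσ, hcd, hη]
      refine Eq.trans ?_ (Finset.sum_congr rfl fun k _ => (e k).symm)
      simp [Finset.sum_sub_distrib, ← hσ, hcd, hη]
    have hη2 : (0:ℝ) ≤ ∑ i, η i ^ 2 := Finset.sum_nonneg fun i _ => sq_nonneg _
    have hb2 : ∑ k, ((if k = d then (1:ℝ) else 0) - c k) ^ 2 ≤ (n + 1) * M ^ 2 := by
      calc ∑ k, ((if k = d then (1:ℝ) else 0) - c k) ^ 2
          ≤ ∑ _k : Fin (n + 1), M ^ 2 := by
            refine Finset.sum_le_sum fun k _ => ?_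
            have hb : |(if k = d then (1:ℝ) else 0) - c k| ≤ M := by
              by_cases hk : k = d
              · simp only [hk, hcd, if_true, sub_zero, abs_one]; exact hM1
              · simpa only [hk, if_false, zero_sub, abs_neg] using hcb k
            calc ((if k = d then (1:ℝ) else 0) - c k) ^ 2
                = |(if k = d then (1:ℝ) else 0) - c k| ^ 2 := (sq_abs _).symm
              _ ≤ M ^ 2 := pow_le_pow_left₀ (abs_nonneg _) hb 2
        _ = (n + 1) * M ^ 2 := by
            rw [Finset.sum_const, Finset.card_univ, Fintype.card_fin, nsmul_eq_mul]
            push_cast; ring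
    have hCS : ξ d ^ 2 ≤ (n + 1) * M ^ 2 * ∑ i, η i ^ 2 := by
      rw [hξd]
      calc (∑ k, η k * ((if k = d then 1 else 0) - c k)) ^ 2
          ≤ (∑ k, η k ^ 2) * ∑ k, ((if k = d then (1:ℝ) else 0) - c k) ^ 2 :=
            Finset.sum_mul_sq_le_sq_mul_sq _ _ _
        _ ≤ (∑ k, η k ^ 2) * ((n + 1) * M ^ 2) := mul_le_mul_of_nonneg_left hb2 hη2
        _ = (n + 1) * M ^ 2 * ∑ i, η i ^ 2 := by ring
    have hηc : ∀ i : Fin n, η i.castSucc = ξ i.castSucc := by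
      intro i
      have h : i.castSucc ≠ d := (Fin.castSucc_lt_last i).ne
      simp [hη, h]
    have hsplit : ∑ i, ξ i ^ 2 ≤ C * ∑ i, η i ^ 2 := by
      have e1 : ∑ i, ξ i ^ 2 = (∑ i : Fin n, ξ i.castSucc ^ 2) + ξ d ^ 2 :=
        Fin.sum_univ_castSucc _
      have e2 : ∑ i, η i ^ 2 = (∑ i : Fin n, ξ i.castSucc ^ 2) + η d ^ 2 := by
        rw [Fin.sum_univ_castSucc]
        simp only [hηc]
        rfl
      have h3 : (∑ i : Fin n, ξ i.castSucc ^ 2) ≤ ∑ i, η i ^ 2 := by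
        rw [e2]
        have := sq_nonneg (η d)
        linarith
      calc ∑ i, ξ i ^ 2 = (∑ i : Fin n, ξ i.castSucc ^ 2) + ξ d ^ 2 := e1
        _ ≤ (∑ i, η i ^ 2) + (n + 1) * M ^ 2 * ∑ i, η i ^ 2 := add_le_add h3 hCS
        _ = C * ∑ i, η i ^ 2 := by rw [hC]; ring
    calc ν / C * ∑ i, ξ i ^ 2 ≤ ν / C * (C * ∑ i, η i ^ 2) :=
          mul_le_mul_of_nonneg_left hsplit (by positivity)
      _ = ν * ∑ i, η i ^ 2 := by field_simp
      _ ≤ ∑ i, ∑ j, a i j * η i * η j := hell η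
      _ = ∑ i, ∑ j, s i j * η i * η j := hsym.symm
      _ = ∑ k, ∑ l, ta k l * ξ k * ξ l := hquad.symm
end
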